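/- arXiv:2201.12531 — 3 statements merged into one kernel-verified Lean document; each statement's English description precedes it below -/
import Mathlib

section
/- Let G be a connected bipartite graph with colour classes V and E, let f be a hypertree of G realized by a spanning tree τ. A subset A ⊆ E is tight at f if and only if the restriction τ|_A of τ to the subgraph induced by A is a spanning forest of G|_A, i.e., the components of τ|_A are exactly spanning trees of the components of G|_A. -/
open SimpleGraph

variable {V E : Type*}

/-- The bipartite graph on `V ⊕ E` determined by the incidence relation `r`. -/
def BipGraph (r : V → E → Prop) : SimpleGraph (V ⊕ E) where
  Adj x y := (∃ v e, x = Sum.inl v ∧ y = Sum.inr e ∧ r v e) ∨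
             (∃ v e, x = Sum.inr e ∧ y = Sum.inl v ∧ r v e)
  symm := ⟨by
    rintro x y (⟨v, e, rfl, rfl, h⟩ | ⟨v, e, rfl, rfl, h⟩)
    · exact Or.inr ⟨v, e, rfl, rfl, h⟩
    · exact Or.inl ⟨v, e, rfl, rfl, h⟩⟩
  loopless := ⟨by
    rintro x (⟨v, e, rfl, h, _⟩ | ⟨v, e, rfl, h, _⟩) <;> simp_all⟩

/-- `τ` is a spanning tree of `G`. -/
def IsSpanningTree {α : Type*} (G τ : SimpleGraph α) : Prop :=
  τ ≤ G ∧ τ.Connected ∧ τ.IsAcyclic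

/-- A hypertree of the hypergraph induced by the bipartite graph `BipGraph r`
(with `E` the set of hyperedges): a function realized by a spanning tree. -/
def IsHypertree (r : V → E → Prop) (f : E → ℕ) : Prop :=
  ∃ τ : SimpleGraph (V ⊕ E), IsSpanningTree (BipGraph r) τ ∧
    ∀ e : E, (τ.neighborSet (Sum.inr e)).ncard = f e + 1

/-- The restriction of a graph `H` on `V ⊕ E` (typically a subgraph of `BipGraph r`)
to the hyperedge set `A` together with all `V`-vertices incident (in `G`) to `A`. -/
def BipRestrict (r : V → E → Prop) (H : SimpleGraph (V ⊕ E)) (A : Set E) :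
    SimpleGraph ({v : V // ∃ e ∈ A, r v e} ⊕ A) where
  Adj x y := H.Adj (Sum.elim (fun v => Sum.inl v.1) (fun e => Sum.inr e.1) x)
               (Sum.elim (fun v => Sum.inl v.1) (fun e => Sum.inr e.1) y)
  symm := ⟨fun _ _ h => H.adj_symm h⟩
  loopless := ⟨by
    rintro (v | e) h <;> exact H.irrefl h⟩

/-- `μ(A) = |⋃A| - c(A)`. -/
noncomputable def mu (r : V → E → Prop) (A : Set E) : ℕ :=
  Nat.card {v : V // ∃ e ∈ A, r v e} -
    Nat.card (BipRestrict r (BipGraph r) A).ConnectedComponent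

/-- `A` is tight at `f`. -/
noncomputable def Tight (r : V → E → Prop) (f : E → ℕ) (A : Finset E) : Prop :=
  ∑ e ∈ A, f e = mu r (↑A : Set E)

open Classical in
/-- The function obtained from `f` by decreasing `f e` by one and increasing `f e'` by one. -/
noncomputable def Transfer (f : E → ℕ) (e e' : E) : E → ℕ :=
  fun x => if x = e then f e - 1 else if x = e' then f e' + 1 else f x

/-- The internal inactivity of `f`: the number of internally inactive hyperedges. -/
noncomputable def intInact (r : V → E → Prop) [LT E] (f : E → ℕ) : ℕ :=
  Nat.card {e : E // ∃ e', e' < e ∧ IsHypertree r (Transfer f e e')}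

/-- The external inactivity of `f`: the number of externally inactive hyperedges. -/
noncomputable def extInact (r : V → E → Prop) [LT E] (f : E → ℕ) : ℕ :=
  Nat.card {e : E // ∃ e', e' < e ∧ IsHypertree r (Transfer f e' e)}

/-- The interior polynomial `I_G(x) = ∑_f x^{ῑ(f)}`. -/
noncomputable def interiorPoly (r : V → E → Prop) [Fintype E] [LT E] : Polynomial ℤ :=
  ∑ i ∈ Finset.range (Fintype.card E + 1),
    Polynomial.C ((Nat.card {f : E → ℕ // IsHypertree r f ∧ intInact r f = i} : ℕ) : ℤ) *
      Polynomial.X ^ i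

/-- The exterior polynomial `X_G(y) = ∑_f y^{ε̄(f)}`. -/
noncomputable def exteriorPoly (r : V → E → Prop) [Fintype E] [LT E] : Polynomial ℤ :=
  ∑ i ∈ Finset.range (Fintype.card E + 1),
    Polynomial.C ((Nat.card {f : E → ℕ // IsHypertree r f ∧ extInact r f = i} : ℕ) : ℤ) *
      Polynomial.X ^ i

lemma aux_isAcyclic_of_injective_hom {α β : Type*} {H : SimpleGraph α} {F : SimpleGraph β}
    (φ : H →g F) (hinj : Function.Injective φ) (hF : F.IsAcyclic) : H.IsAcyclic := by
  intro v c hc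
  exact hF (c.map φ) (hc.map hinj)

lemma aux_connected_induce_supp {α : Type*} {F : SimpleGraph α} (C : F.ConnectedComponent) :
    (F.induce C.supp).Connected := by
  classical
  obtain ⟨u, hu⟩ := C.exists_rep
  apply F.induce_connected_of_patches u (by rw [ConnectedComponent.mem_supp_iff]; exact hu)
  intro v hv
  rw [ConnectedComponent.mem_supp_iff] at hv
  have hr : F.Reachable u v := ConnectedComponent.exact (hu.trans hv.symm)
  obtain ⟨p⟩ := hr
  refine ⟨{x | x ∈ p.support}, ?_, p.start_mem_support, p.end_mem_support, ?_⟩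
  · intro x hx
    rw [ConnectedComponent.mem_supp_iff, ← hu]
    exact ConnectedComponent.sound ((p.takeUntil x hx).reachable.symm)
  · exact (p.connected_induce_support).preconnected _ _

-- the hom from an induced subgraph into the ambient graph
def auxInduceHom {α : Type*} (F : SimpleGraph α) (s : Set α) : F.induce s →g F where
  toFun := Subtype.val
  map_rel' := fun h => h


-- aux 3: forest formula
lemma aux_forest_card {α : Type*} [Fintype α] (F : SimpleGraph α) (hF : F.IsAcyclic) :
    Fintype.card α = Nat.card F.edgeSet + Nat.card F.ConnectedComponent := by
  classical
  have : Fintype F.ConnectedComponent := Fintype.ofFinite _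
  have htree : ∀ C : F.ConnectedComponent, (F.induce C.supp).IsTree := by
    intro C
    exact ⟨aux_connected_induce_supp C,
      aux_isAcyclic_of_injective_hom (auxInduceHom F C.supp) Subtype.val_injective hF⟩
  have hfib : ∀ C : F.ConnectedComponent,
      Fintype.card {x // F.connectedComponentMk x = C} = Fintype.card C.supp := by
    intro C
    exact Fintype.card_congr (Equiv.subtypeEquivRight
      (fun x => (ConnectedComponent.mem_supp_iff C x).symm))
  have hv : Fintype.card α = ∑ C : F.ConnectedComponent, Fintype.card C.supp := by
    rw [← Fintype.card_congr (Equiv.sigmaFiberEquiv F.connectedComponentMk),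
      Fintype.card_sigma]
    exact Finset.sum_congr rfl fun C _ => hfib C
  have hdeg : ∀ (C : F.ConnectedComponent) (v : C.supp),
      (F.induce C.supp).degree v = F.degree v.1 := by
    intro C v
    rw [← card_neighborSet_eq_degree, ← card_neighborSet_eq_degree]
    apply Fintype.card_congr
    refine ⟨fun w => ⟨w.1.1, w.2⟩, fun w => ⟨⟨w.1, ?_⟩, w.2⟩, fun w => rfl, fun w => rfl⟩
    rw [ConnectedComponent.mem_supp_iff]
    exact (ConnectedComponent.sound (F.adj_symm w.2).reachable).trans
      ((ConnectedComponent.mem_supp_iff C v.1).mp v.2)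
  have hedge : Finset.card F.edgeFinset =
      ∑ C : F.ConnectedComponent, Finset.card (F.induce C.supp).edgeFinset := by
    have h2 : 2 * Finset.card F.edgeFinset =
        ∑ C : F.ConnectedComponent, 2 * Finset.card (F.induce C.supp).edgeFinset := by
      rw [← F.sum_degrees_eq_twice_card_edges,
        ← Fintype.sum_equiv (Equiv.sigmaFiberEquiv F.connectedComponentMk)
          (fun x => F.degree ((Equiv.sigmaFiberEquiv F.connectedComponentMk) x))
          (fun v => F.degree v) (fun x => rfl),
        ← Finset.univ_sigma_univ, Finset.sum_sigma]
      refine Finset.sum_congr rfl fun C _ => ?_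
      rw [← (F.induce C.supp).sum_degrees_eq_twice_card_edges]
      refine Fintype.sum_equiv (Equiv.subtypeEquivRight
        (fun x => (ConnectedComponent.mem_supp_iff C x).symm)) _ _ (fun x => ?_)
      exact (hdeg C _).symm
    have h3 := Finset.mul_sum (Finset.univ : Finset F.ConnectedComponent)
      (fun C => Finset.card (F.induce C.supp).edgeFinset) 2
    omega
  have hC : ∀ C : F.ConnectedComponent,
      Fintype.card C.supp = Finset.card (F.induce C.supp).edgeFinset + 1 :=
    fun C => ((htree C).card_edgeFinset).symm
  rw [Nat.card_eq_fintype_card, Nat.card_eq_fintype_card, ← Set.toFinset_card]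
  rw [hv]
  have : (F.edgeSet.toFinset : Finset (Sym2 α)) = F.edgeFinset := rfl
  rw [this, hedge]
  have : ∑ C : F.ConnectedComponent, Fintype.card C.supp =
      ∑ C : F.ConnectedComponent, (Finset.card (F.induce C.supp).edgeFinset + 1) :=
    Finset.sum_congr rfl fun C _ => hC C
  rw [this, Finset.sum_add_distrib, Finset.sum_const, Finset.card_univ, smul_eq_mul, mul_one]


lemma aux_compMap_surjective {α : Type*} {H G' : SimpleGraph α} (h : H ≤ G') :
    Function.Surjective (ConnectedComponent.map (Hom.ofLE h)) := by
  intro C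
  refine C.ind fun v => ⟨H.connectedComponentMk v, ?_⟩
  rfl

lemma aux_card_le {α : Type*} [Finite α] {H G' : SimpleGraph α} (h : H ≤ G') :
    Nat.card G'.ConnectedComponent ≤ Nat.card H.ConnectedComponent :=
  Nat.card_le_card_of_surjective _ (aux_compMap_surjective h)

lemma aux_card_eq_iff {α : Type*} [Finite α] {H G' : SimpleGraph α} (h : H ≤ G') :
    Nat.card H.ConnectedComponent = Nat.card G'.ConnectedComponent ↔
      ∀ x y, G'.Reachable x y ↔ H.Reachable x y := by
  constructor
  · intro hc x y
    have hbij : Function.Bijective (ConnectedComponent.map (Hom.ofLE h)) :=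
      (Nat.bijective_iff_surjective_and_card _).mpr ⟨aux_compMap_surjective h, hc⟩
    constructor
    · intro hr
      have : (H.connectedComponentMk x).map (Hom.ofLE h) =
          (H.connectedComponentMk y).map (Hom.ofLE h) := by
        simp only [ConnectedComponent.map_mk]
        exact ConnectedComponent.sound hr
      exact ConnectedComponent.exact (hbij.1 this)
    · exact fun hr => hr.map (Hom.ofLE h)
  · intro hr
    have hbij : Function.Bijective (ConnectedComponent.map (Hom.ofLE h)) := by
      refine ⟨?_, aux_compMap_surjective h⟩
      intro C D hCD
      induction C using SimpleGraph.ConnectedComponent.ind with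
      | _ x =>
      induction D using SimpleGraph.ConnectedComponent.ind with
      | _ y =>
      exact ConnectedComponent.sound ((hr x y).mp (ConnectedComponent.exact hCD))
    exact Nat.card_eq_of_bijective _ hbij

/-- `A` is tight at `f` iff the restriction `τ|_A` of a realizing
spanning tree `τ` is a spanning forest of `G|_A` (it is acyclic and its components
span exactly the components of `G|_A`, i.e. it has the same reachability relation). -/
theorem tight_iff_spanning_forest {V E : Type*} [Fintype V] [Fintype E] (r : V → E → Prop)
    (hconn : (BipGraph r).Connected) (f : E → ℕ) (τ : SimpleGraph (V ⊕ E))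
    (hτ : IsSpanningTree (BipGraph r) τ)
    (hreal : ∀ e : E, (τ.neighborSet (Sum.inr e)).ncard = f e + 1) (A : Finset E) :
    Tight r f A ↔
      ((BipRestrict r τ (↑A : Set E)).IsAcyclic ∧
        ∀ x y, (BipRestrict r (BipGraph r) (↑A : Set E)).Reachable x y ↔
          (BipRestrict r τ (↑A : Set E)).Reachable x y) := by
  classical
  set S : Set E := (↑A : Set E) with hS
  set H := BipRestrict r τ S with hH
  set G' := BipRestrict r (BipGraph r) S with hG'
  -- the elimination map
  set emb : ({v : V // ∃ e ∈ S, r v e} ⊕ S) → (V ⊕ E) :=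
    Sum.elim (fun v => Sum.inl v.1) (fun e => Sum.inr e.1) with hemb
  have hembinj : Function.Injective emb := by
    rintro (a | a) (b | b) hab <;>
      simp only [hemb, Sum.elim_inl, Sum.elim_inr, Sum.inl.injEq, Sum.inr.injEq] at hab <;>
      first
        | (exact congrArg Sum.inl (Subtype.ext hab))
        | (exact congrArg Sum.inr (Subtype.ext hab))
        | (exact absurd hab (by simp))
  have hle : H ≤ G' := fun {x y} hxy => hτ.1 hxy
  -- H is acyclic
  have hacyc : H.IsAcyclic :=
    aux_isAcyclic_of_injective_hom ⟨emb, fun h => h⟩ hembinj hτ.2.2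
  -- no same-side adjacencies in H
  have hnoLL : ∀ a b, ¬ H.Adj (Sum.inl a) (Sum.inl b) := by
    rintro a b hab
    rcases hτ.1 hab with ⟨v, e, h1, h2, _⟩ | ⟨v, e, h1, h2, _⟩ <;> simp_all [hemb]
  have hnoRR : ∀ a b, ¬ H.Adj (Sum.inr a) (Sum.inr b) := by
    rintro a b hab
    rcases hτ.1 hab with ⟨v, e, h1, h2, _⟩ | ⟨v, e, h1, h2, _⟩ <;> simp_all [hemb]
  -- neighbor sets
  have hnbhd : ∀ e : S, Nat.card (H.neighborSet (Sum.inr e)) = f e.1 + 1 := by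
    intro e
    have hbij : Function.Bijective
        (fun w : H.neighborSet (Sum.inr e) => (⟨emb w.1, w.2⟩ : τ.neighborSet (Sum.inr e.1))) := by
      constructor
      · intro w w' hww'
        exact Subtype.ext (hembinj (congrArg Subtype.val hww'))
      · rintro ⟨y, hy⟩
        rcases hτ.1 hy with ⟨v, e', h1, h2, hr⟩ | ⟨v, e', h1, h2, hr⟩
        · exact absurd h1 (by simp)
        · have he' : e' = e.1 := by simpa using h1.symm
          subst he'
          subst h2
          exact ⟨⟨Sum.inl ⟨v, ⟨e.1, e.2, hr⟩⟩, hy⟩, rfl⟩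
    rw [Nat.card_eq_of_bijective _ hbij, Nat.card_coe_set_eq, hreal]
  -- edge count
  have hedge : Nat.card H.edgeSet = ∑ e ∈ A, (f e + 1) := by
    have hbij : Function.Bijective
        (fun p : (Σ e : S, H.neighborSet (Sum.inr e)) =>
          (⟨s(Sum.inr p.1, p.2.1), p.2.2⟩ : H.edgeSet)) := by
      constructor
      · rintro ⟨e1, x1, h1⟩ ⟨e2, x2, h2⟩ h12
        have h12' : s(Sum.inr e1, x1) = s(Sum.inr e2, x2) := congrArg Subtype.val h12
        rw [Sym2.eq_iff] at h12'
        rcases h12' with ⟨ha, hb⟩ | ⟨ha, hb⟩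
        · obtain rfl : e1 = e2 := Sum.inr_injective ha
          subst hb
          rfl
        · subst hb
          rw [← ha] at h2
          exact absurd h2 (hnoRR e2 e1)
      · rintro ⟨z, hz⟩
        induction z using Sym2.ind with
        | _ a b =>
        rw [SimpleGraph.mem_edgeSet] at hz
        rcases a with va | ea <;> rcases b with vb | eb
        · exact absurd hz (hnoLL _ _)
        · exact ⟨⟨eb, ⟨Sum.inl va, hz.symm⟩⟩, Subtype.ext (Sym2.eq_swap)⟩
        · exact ⟨⟨ea, ⟨Sum.inl vb, hz⟩⟩, rfl⟩
        · exact absurd hz (hnoRR _ _)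
    rw [← Nat.card_eq_of_bijective _ hbij, Nat.card_eq_fintype_card, Fintype.card_sigma]
    have h1 : ∀ e : S, Fintype.card (H.neighborSet (Sum.inr e)) = f e.1 + 1 := by
      intro e
      rw [← Nat.card_eq_fintype_card]
      exact hnbhd e
    rw [Finset.sum_congr rfl (fun e _ => h1 e)]
    rw [← Finset.sum_coe_sort A (fun e => f e + 1)]
    exact Fintype.sum_equiv (Equiv.subtypeEquivRight (by simp [hS])) _ _ (fun x => rfl)
  -- vertex count
  have hvert : Nat.card ({v : V // ∃ e ∈ S, r v e} ⊕ S) =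
      Nat.card {v : V // ∃ e ∈ S, r v e} + A.card := by
    rw [Nat.card_sum, Nat.card_coe_set_eq, hS, Set.ncard_coe_finset]
  -- the forest formula
  have hforest := aux_forest_card H hacyc
  rw [← Nat.card_eq_fintype_card] at hforest
  have hkey : Nat.card {v : V // ∃ e ∈ S, r v e} =
      (∑ e ∈ A, f e) + Nat.card H.ConnectedComponent := by
    have hsum : ∑ e ∈ A, (f e + 1) = (∑ e ∈ A, f e) + A.card := by
      rw [Finset.sum_add_distrib, Finset.sum_const, smul_eq_mul, mul_one]
    omega
  have hle2 : Nat.card G'.ConnectedComponent ≤ Nat.card H.ConnectedComponent :=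
    aux_card_le hle
  have hmain : Tight r f A ↔
      Nat.card H.ConnectedComponent = Nat.card G'.ConnectedComponent := by
    unfold Tight mu
    rw [← hS, ← hG']
    constructor <;> intro h <;> omega
  rw [hmain, aux_card_eq_iff hle]
  exact ⟨fun h => ⟨hacyc, h⟩, fun h => h.2⟩
end

section
/- Let G be a connected bipartite graph with colour classes V and E, equipped with a total order on E, and f a hypertree. A hyperedge e ∈ E is internally inactive with respect to f if and only if f(e) ≠ 0 and there exists a hyperedge e' < e such that every subset E' ⊆ E containing e' and not containing e is not tight at f. -/
open SimpleGraph

variable {V E : Type*}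

open Sum
section GeneralGraph

variable {α : Type*}

/-- Delete all edges at a vertex. -/
def HTDel (H : SimpleGraph α) (t : α) : SimpleGraph α := H.deleteEdges {p | t ∈ p}

lemma HTDel_adj {H : SimpleGraph α} {t x y : α} :
    (HTDel H t).Adj x y ↔ H.Adj x y ∧ t ≠ x ∧ t ≠ y := by
  simp only [HTDel, deleteEdges_adj, Set.mem_setOf_eq, Sym2.mem_iff, not_or]

lemma HTDel_le {H : SimpleGraph α} {t : α} : HTDel H t ≤ H := deleteEdges_le _

lemma HTDel_le_deleteEdges {H : SimpleGraph α} {t u : α} :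
    HTDel H t ≤ H.deleteEdges {s(t, u)} := by
  intro z w h
  rw [HTDel_adj] at h
  refine deleteEdges_adj.mpr ⟨h.1, ?_⟩
  simp only [Set.mem_singleton_iff]
  intro hzw
  have : t ∈ s(z, w) := hzw ▸ (Sym2.mem_mk_left t u)
  rw [Sym2.mem_iff] at this
  rcases this with h' | h' <;> [exact h.2.1 h'; exact h.2.2 h']

lemma HTDel_isolated {H : SimpleGraph α} {t w : α} : ¬ (HTDel H t).Adj t w := by
  rw [HTDel_adj]; rintro ⟨_, h, _⟩; exact h rfl

lemma HT_eq_of_reach_isolated {H : SimpleGraph α} {t x : α}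
    (hiso : ∀ w, ¬ H.Adj t w) (h : H.Reachable t x) : t = x := by
  obtain ⟨w⟩ := h
  cases w with
  | nil => rfl
  | cons h' p => exact absurd h' (hiso _)

lemma HT_mem_support_of_mem_edges {H : SimpleGraph α} {x y t : α} {w : H.Walk x y}
    {ed : Sym2 α} (hed : ed ∈ w.edges) (ht : t ∈ ed) : t ∈ w.support := by
  induction ed using Sym2.ind with
  | _ a b =>
    rw [Sym2.mem_iff] at ht
    rcases ht with rfl | rfl
    · exact w.fst_mem_support_of_mem_edges hed
    · exact w.snd_mem_support_of_mem_edges hed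

lemma HT_reach_del_of_not_mem_support {H : SimpleGraph α} {x y t : α}
    (w : H.Walk x y) (ht : t ∉ w.support) : (HTDel H t).Reachable x y :=
  ⟨w.toDeleteEdges _ (fun ed hed hmem => ht (HT_mem_support_of_mem_edges hed hmem))⟩

lemma HT_reach_take {H : SimpleGraph α} {x y z : α} (w : H.Walk x y)
    (hz : z ∈ w.support) : H.Reachable x z := by classical exact ⟨w.takeUntil z hz⟩

lemma HT_reach_drop {H : SimpleGraph α} {x y z : α} (w : H.Walk x y)
    (hz : z ∈ w.support) : H.Reachable z y := by classical exact ⟨w.dropUntil z hz⟩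

lemma HT_first_step {H : SimpleGraph α} {x y : α} (hxy : x ≠ y) (hr : H.Reachable x y) :
    ∃ u, H.Adj x u ∧ (HTDel H x).Reachable u y := by
  classical
  obtain ⟨w0⟩ := hr
  obtain ⟨w, hw⟩ := w0.toPath
  cases w with
  | nil => exact absurd rfl hxy
  | cons h q =>
    rw [Walk.cons_isPath_iff] at hw
    exact ⟨_, h, HT_reach_del_of_not_mem_support q hw.2⟩

lemma HT_reach_delete_cases {H : SimpleGraph α} {x y z w : α} (p : H.Walk z w) :
    (H.deleteEdges {s(x, y)}).Reachable z w ∨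
      ((H.deleteEdges {s(x, y)}).Reachable z x ∧ (H.deleteEdges {s(x, y)}).Reachable w y) ∨
      ((H.deleteEdges {s(x, y)}).Reachable z y ∧ (H.deleteEdges {s(x, y)}).Reachable w x) := by
  set σ := H.deleteEdges {s(x, y)} with hσ
  induction p with
  | nil => exact Or.inl (Reachable.refl _)
  | @cons z u w h p ih =>
    by_cases hs : s(z, u) = s(x, y)
    · rw [Sym2.eq_iff] at hs
      rcases hs with ⟨rfl, rfl⟩ | ⟨rfl, rfl⟩
      · -- z = x, u = y
        rcases ih with h1 | ⟨h1, h2⟩ | ⟨h1, h2⟩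
        · exact Or.inr (Or.inl ⟨Reachable.refl _, h1.symm⟩)
        · exact Or.inr (Or.inl ⟨Reachable.refl _, h2⟩)
        · exact Or.inl (h2.symm.trans (Reachable.refl _))
      · -- z = y, u = x
        rcases ih with h1 | ⟨h1, h2⟩ | ⟨h1, h2⟩
        · exact Or.inr (Or.inr ⟨Reachable.refl _, h1.symm⟩)
        · exact Or.inl h2.symm
        · exact Or.inr (Or.inr ⟨Reachable.refl _, h2⟩)
    · have hadj : σ.Adj z u := deleteEdges_adj.mpr ⟨h, by simpa using hs⟩
      rcases ih with h1 | ⟨h1, h2⟩ | ⟨h1, h2⟩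
      · exact Or.inl (hadj.reachable.trans h1)
      · exact Or.inr (Or.inl ⟨hadj.reachable.trans h1, h2⟩)
      · exact Or.inr (Or.inr ⟨hadj.reachable.trans h1, h2⟩)

lemma HT_reach_delete_or {H : SimpleGraph α} (x y : α) {z : α} (h : H.Reachable z x) :
    (H.deleteEdges {s(x, y)}).Reachable z x ∨ (H.deleteEdges {s(x, y)}).Reachable z y := by
  obtain ⟨p⟩ := h
  rcases HT_reach_delete_cases (x := x) (y := y) p with h1 | ⟨h1, h2⟩ | ⟨h1, h2⟩
  · exact Or.inl h1
  · exact Or.inl h1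
  · exact Or.inr h1

lemma HT_bridge_of_acyclic {H : SimpleGraph α} (hac : H.IsAcyclic) {x y : α}
    (hadj : H.Adj x y) : ¬ (H.deleteEdges {s(x, y)}).Reachable x y := by
  have h := (isAcyclic_iff_forall_adj_isBridge.mp hac) hadj
  rw [isBridge_iff] at h
  exact h

lemma HT_acyclic_mono {H K : SimpleGraph α} (h : H ≤ K) (hK : K.IsAcyclic) : H.IsAcyclic :=
  fun _ c hc => hK (c.mapLe h) (hc.mapLe h)

lemma HT_cc_finite [Finite α] (H : SimpleGraph α) : Finite H.ConnectedComponent :=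
  Finite.of_surjective H.connectedComponentMk (fun c => Quot.exists_rep c)

lemma HT_card_cc_mono [Finite α] {H K : SimpleGraph α} (h : H ≤ K) :
    Nat.card K.ConnectedComponent ≤ Nat.card H.ConnectedComponent := by
  haveI := HT_cc_finite H
  exact Nat.card_le_card_of_surjective
    (ConnectedComponent.map (Hom.ofLE h))
    (fun c => by
      obtain ⟨v, rfl⟩ := Quot.exists_rep c
      exact ⟨H.connectedComponentMk v, rfl⟩)

lemma HT_card_cc_connected [Finite α] {H : SimpleGraph α} (h : H.Connected) :
    Nat.card H.ConnectedComponent = 1 := by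
  haveI := HT_cc_finite H
  rw [Nat.card_eq_one_iff_unique]
  constructor
  · exact ⟨ConnectedComponent.ind₂ fun v w => ConnectedComponent.sound (h.preconnected v w)⟩
  · obtain ⟨v⟩ := h.nonempty
    exact ⟨H.connectedComponentMk v⟩

lemma HT_card_cc_pos [Finite α] [Nonempty α] (H : SimpleGraph α) :
    1 ≤ Nat.card H.ConnectedComponent := by
  haveI := HT_cc_finite H
  haveI : Nonempty H.ConnectedComponent := ⟨H.connectedComponentMk (Classical.arbitrary α)⟩
  exact Nat.card_pos

end GeneralGraph

section G2
variable {α : Type*}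


lemma HT_card_cc_del_edge [Finite α] {H : SimpleGraph α} {x y : α} (hadj : H.Adj x y)
    (hbr : ¬ (H.deleteEdges {s(x, y)}).Reachable x y) :
    Nat.card (H.deleteEdges {s(x, y)}).ConnectedComponent
      = Nat.card H.ConnectedComponent + 1 := by
  classical
  set σ := H.deleteEdges {s(x, y)} with hσ
  haveI := Finite.of_surjective σ.connectedComponentMk (fun c => Quot.exists_rep c)
  haveI := Finite.of_surjective H.connectedComponentMk (fun c => Quot.exists_rep c)
  have hle : σ ≤ H := deleteEdges_le _
  let φ : σ.ConnectedComponent → H.ConnectedComponent :=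
    ConnectedComponent.map (Hom.ofLE hle)
  have hφ : ∀ v, φ (σ.connectedComponentMk v) = H.connectedComponentMk v := fun v => rfl
  let Φ : σ.ConnectedComponent → H.ConnectedComponent ⊕ Unit := fun d =>
    if d = σ.connectedComponentMk y then Sum.inr () else Sum.inl (φ d)
  have hbij : Function.Bijective Φ := by
    constructor
    · intro d1 d2 h
      by_cases h1 : d1 = σ.connectedComponentMk y <;>
        by_cases h2 : d2 = σ.connectedComponentMk y
      · rw [h1, h2]
      · simp only [Φ, if_pos h1, if_neg h2] at h; exact absurd h (by simp)
      · simp only [Φ, if_neg h1, if_pos h2] at h; exact absurd h (by simp)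
      · simp only [Φ, if_neg h1, if_neg h2, Sum.inl.injEq] at h
        obtain ⟨z1, rfl⟩ := Quot.exists_rep d1
        obtain ⟨z2, rfl⟩ := Quot.exists_rep d2
        have hr : H.Reachable z1 z2 := ConnectedComponent.exact h
        obtain ⟨p⟩ := hr
        rcases HT_reach_delete_cases (x := x) (y := y) p with hc | ⟨hc1, hc2⟩ | ⟨hc1, hc2⟩
        · exact ConnectedComponent.sound hc
        · exact absurd (ConnectedComponent.sound hc2) h2
        · exact absurd (ConnectedComponent.sound hc1) h1
    · intro b
      rcases b with c | u
      · obtain ⟨z, rfl⟩ := Quot.exists_rep c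
        by_cases hzy : σ.Reachable z y
        · refine ⟨σ.connectedComponentMk x, ?_⟩
          have hxy : σ.connectedComponentMk x ≠ σ.connectedComponentMk y :=
            fun h => hbr (ConnectedComponent.exact h)
          simp only [Φ, if_neg hxy, hφ]
          have : H.Reachable x z := (hadj.reachable).trans ((hzy.mono hle).symm)
          exact congrArg Sum.inl (ConnectedComponent.sound this)
        · refine ⟨σ.connectedComponentMk z, ?_⟩
          have hne : σ.connectedComponentMk z ≠ σ.connectedComponentMk y :=
            fun h => hzy (ConnectedComponent.exact h)
          simp only [Φ, if_neg hne]
          rfl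
      · exact ⟨σ.connectedComponentMk y, by simp [Φ]⟩
  have := Nat.card_eq_of_bijective Φ hbij
  rw [this, Nat.card_sum]
  simp

lemma HT_forest_card [Fintype α] :
    ∀ (n : ℕ) (H : SimpleGraph α), H.IsAcyclic → H.edgeSet.ncard = n →
      n + Nat.card H.ConnectedComponent = Nat.card α := by
  intro n
  induction n using Nat.strong_induction_on with
  | _ n ih =>
    intro H hac hn
    rcases Nat.eq_zero_or_pos n with rfl | hpos
    · have hE : H.edgeSet = ∅ := (Set.ncard_eq_zero (Set.toFinite _)).mp hn
      have hbot : H = ⊥ := by rwa [← edgeSet_eq_empty]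
      subst hbot
      have : Function.Bijective ((⊥ : SimpleGraph α).connectedComponentMk) := by
        constructor
        · intro a b h
          exact (reachable_bot).mp (ConnectedComponent.exact h)
        · exact fun c => Quot.exists_rep c
      rw [zero_add, ← Nat.card_eq_of_bijective _ this]
    · obtain ⟨ed, hed⟩ : H.edgeSet.Nonempty := Set.nonempty_of_ncard_ne_zero (by omega)
      revert hed
      refine Sym2.ind (fun x y hed => ?_) ed
      have hadj : H.Adj x y := hed
      set σ := H.deleteEdges {s(x, y)} with hσ
      have hbr : ¬ σ.Reachable x y := HT_bridge_of_acyclic hac hadj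
      have hacσ : σ.IsAcyclic := HT_acyclic_mono (deleteEdges_le _) hac
      have hedges : σ.edgeSet.ncard = n - 1 := by
        rw [hσ, edgeSet_deleteEdges]
        rw [show H.edgeSet \ {s(x,y)} = H.edgeSet \ {s(x,y)} from rfl]
        rw [Set.ncard_diff_singleton_of_mem hed, hn]
      have hIH := ih (n - 1) (by omega) σ hacσ hedges
      have hcc : Nat.card σ.ConnectedComponent = Nat.card H.ConnectedComponent + 1 :=
        HT_card_cc_del_edge hadj hbr
      omega

lemma HT_acyclic_add_edge {H : SimpleGraph α} (hac : H.IsAcyclic) {p q : α}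
    (hpq : p ≠ q) (hnr : ¬ H.Reachable p q) :
    (H ⊔ fromEdgeSet {s(p, q)}).IsAcyclic := by
  intro v c hc
  by_cases he : s(p, q) ∈ c.edges
  · have h2 := (adj_and_reachable_delete_edges_iff_exists_cycle.mpr ⟨v, c, hc, he⟩).2
    apply hnr
    refine h2.mono ?_
    intro z w hzw
    rcases hzw with ⟨hzw1, hzw2⟩
    rcases hzw1 with h | h
    · exact h
    · exact absurd h hzw2
  · have hsub : ∀ ed ∈ c.edges, ed ∈ H.edgeSet := by
      intro ed hed
      have h1 := c.edges_subset_edgeSet hed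
      rw [edgeSet_sup, edgeSet_fromEdgeSet] at h1
      rcases h1 with h1 | ⟨h1, _⟩
      · exact h1
      · rw [Set.mem_singleton_iff] at h1; exact absurd (h1 ▸ hed) he
    exact hac (c.transfer H hsub) (hc.transfer hsub)

lemma HT_connected_swap {τ : SimpleGraph α} (hc : τ.Connected) {x y p q : α}
    (hxy : τ.Adj x y) (hsep : ¬ (τ.deleteEdges {s(x, y)}).Reachable p q) :
    ((τ.deleteEdges {s(x, y)}) ⊔ fromEdgeSet {s(p, q)}).Connected := by
  set σ := τ.deleteEdges {s(x, y)} with hσ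
  set τ' := σ ⊔ fromEdgeSet {s(p, q)} with hτ'
  have hpq : p ≠ q := fun h => hsep (h ▸ Reachable.refl p)
  have hle : σ ≤ τ' := le_sup_left
  have hF : τ'.Adj p q := by
    have h1 : (fromEdgeSet {s(p, q)}).Adj p q := by
      rw [fromEdgeSet_adj]; exact ⟨rfl, hpq⟩
    exact (sup_adj _ _ _ _).mpr (Or.inr h1)
  have hreach : ∀ z, σ.Reachable z x ∨ σ.Reachable z y :=
    fun z => HT_reach_delete_or x y (hc.preconnected z x)
  -- x and y are connected in τ'
  have hxyr : τ'.Reachable x y := by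
    rcases hreach p with hp | hp <;> rcases hreach q with hq | hq
    · exact absurd (hp.trans hq.symm) hsep
    · exact ((hp.mono hle).symm.trans (hF.reachable)).trans (hq.mono hle)
    · exact ((hq.mono hle).symm.trans (hF.reachable.symm)).trans (hp.mono hle)
    · exact absurd (hp.trans hq.symm) hsep
  rw [connected_iff]
  refine ⟨?_, ⟨x⟩⟩
  · intro z w
    have hz := hreach z
    have hw := hreach w
    rcases hz with hz | hz <;> rcases hw with hw | hw
    · exact (hz.mono hle).trans (hw.mono hle).symm
    · exact ((hz.mono hle).trans hxyr).trans (hw.mono hle).symm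
    · exact ((hz.mono hle).trans hxyr.symm).trans (hw.mono hle).symm
    · exact (hz.mono hle).trans (hw.mono hle).symm
end G2

section B
variable {V E : Type*} {r : V → E → Prop}

lemma HT_adj_shape {τ : SimpleGraph (V ⊕ E)} (hle : τ ≤ BipGraph r) {x y : V ⊕ E}
    (h : τ.Adj x y) :
    (∃ v e, x = Sum.inl v ∧ y = Sum.inr e ∧ r v e) ∨
      (∃ v e, x = Sum.inr e ∧ y = Sum.inl v ∧ r v e) := hle h

lemma HT_adj_inr {τ : SimpleGraph (V ⊕ E)} (hle : τ ≤ BipGraph r) {a : E} {w : V ⊕ E}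
    (h : τ.Adj (Sum.inr a) w) : ∃ v, w = Sum.inl v ∧ r v a := by
  rcases HT_adj_shape hle h with ⟨v, e, hx, hy, hr⟩ | ⟨v, e, hx, hy, hr⟩
  · exact absurd hx (by simp)
  · rw [Sum.inr.injEq] at hx
    exact ⟨v, hy, hx ▸ hr⟩

lemma HT_adj_inl {τ : SimpleGraph (V ⊕ E)} (hle : τ ≤ BipGraph r) {v : V} {w : V ⊕ E}
    (h : τ.Adj (Sum.inl v) w) : ∃ a, w = Sum.inr a ∧ r v a := by
  rcases HT_adj_shape hle h with ⟨v', e, hx, hy, hr⟩ | ⟨v', e, hx, hy, hr⟩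
  · rw [Sum.inl.injEq] at hx
    exact ⟨e, hy, hx ▸ hr⟩
  · exact absurd hx (by simp)

/-- the embedding of the restricted vertex set -/
def HTi (r : V → E → Prop) (A : Set E) : ({v : V // ∃ e ∈ A, r v e} ⊕ A) → V ⊕ E :=
  Sum.elim (fun v => Sum.inl v.1) (fun e => Sum.inr e.1)

lemma HTi_inj (A : Set E) : Function.Injective (HTi r A) := by
  rintro (x | x) (y | y) h <;> simp [HTi, Subtype.ext_iff] at h ⊢ <;> exact h

lemma HT_restrict_adj {H : SimpleGraph (V ⊕ E)} {A : Set E}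
    {x y : ({v : V // ∃ e ∈ A, r v e} ⊕ A)} :
    (BipRestrict r H A).Adj x y ↔ H.Adj (HTi r A x) (HTi r A y) := Iff.rfl

/-- restriction as a hom -/
def HTresHom (r : V → E → Prop) (H : SimpleGraph (V ⊕ E)) (A : Set E) :
    BipRestrict r H A →g H where
  toFun := HTi r A
  map_rel' := fun h => h

lemma HT_restrict_acyclic {H : SimpleGraph (V ⊕ E)} (A : Set E) (hac : H.IsAcyclic) :
    (BipRestrict r H A).IsAcyclic := by
  intro v c hc
  exact hac ((c.map (HTresHom r H A))) (hc.map (HTi_inj A))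

lemma HT_restrict_mono {H K : SimpleGraph (V ⊕ E)} (h : H ≤ K) (A : Set E) :
    BipRestrict r H A ≤ BipRestrict r K A := fun _ _ hadj => h hadj

lemma HT_restrict_nbr_ncard {τ : SimpleGraph (V ⊕ E)} (hle : τ ≤ BipGraph r) (A : Set E)
    (a : A) :
    ((BipRestrict r τ A).neighborSet (Sum.inr a)).ncard
      = (τ.neighborSet (Sum.inr a.1)).ncard := by
  rw [← Nat.card_coe_set_eq, ← Nat.card_coe_set_eq]
  apply Nat.card_congr
  refine Equiv.ofBijective (fun w => ⟨HTi r A w.1, w.2⟩) ⟨?_, ?_⟩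
  · rintro ⟨w1, h1⟩ ⟨w2, h2⟩ h
    simp only [Subtype.mk.injEq] at h ⊢
    exact HTi_inj A (congrArg Subtype.val h)
  · rintro ⟨w, hw⟩
    obtain ⟨v, rfl, hrv⟩ := HT_adj_inr hle hw
    exact ⟨⟨Sum.inl ⟨v, ⟨a.1, a.2, hrv⟩⟩, hw⟩, rfl⟩

lemma HT_edge_count {β₁ β₂ : Type*} [Fintype β₁] [Fintype β₂] (H : SimpleGraph (β₁ ⊕ β₂))
    (hb : ∀ z w, H.Adj z w → ∃ v a, s(z, w) = s(Sum.inl v, Sum.inr a)) :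
    H.edgeSet.ncard = ∑ b : β₂, (H.neighborSet (Sum.inr b)).ncard := by
  classical
  have hdecomp : H.edgeFinset = Finset.univ.biUnion (fun b => H.incidenceFinset (Sum.inr b)) := by
    ext ed
    simp only [mem_edgeFinset, Finset.mem_biUnion, Finset.mem_univ, true_and,
      mem_incidenceFinset]
    constructor
    · intro hed
      revert hed
      refine Sym2.ind (fun z w hed => ?_) ed
      obtain ⟨v, a, hva⟩ := hb z w hed
      exact ⟨a, hed, by rw [hva]; simp⟩
    · rintro ⟨b, hb1, _⟩
      exact hb1
  have hdisj : ∀ b1 ∈ (Finset.univ : Finset β₂), ∀ b2 ∈ Finset.univ, b1 ≠ b2 →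
      Disjoint (H.incidenceFinset (Sum.inr b1)) (H.incidenceFinset (Sum.inr b2)) := by
    intro b1 _ b2 _ hne
    rw [Finset.disjoint_left]
    intro ed h1 h2
    rw [mem_incidenceFinset] at h1 h2
    obtain ⟨hed1, hmem1⟩ := h1
    obtain ⟨hed2, hmem2⟩ := h2
    revert hed1 hmem1 hmem2
    refine Sym2.ind (fun z w => ?_) ed
    intro hed1 hmem1 hmem2
    obtain ⟨v, a, hva⟩ := hb z w hed1
    rw [hva, Sym2.mem_iff] at hmem1 hmem2
    apply hne
    rcases hmem1 with h | h <;> rcases hmem2 with h' | h' <;> simp_all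
  have hcard : H.edgeFinset.card = ∑ b : β₂, (H.incidenceFinset (Sum.inr b)).card := by
    rw [hdecomp, Finset.card_biUnion hdisj]
  rw [Set.ncard_eq_toFinset_card']
  rw [show H.edgeSet.toFinset = H.edgeFinset from rfl, hcard]
  refine Finset.sum_congr rfl (fun b _ => ?_)
  rw [card_incidenceFinset_eq_degree, ← card_neighborFinset_eq_degree,
    Set.ncard_eq_toFinset_card']
  rfl

end B

section C
variable {V E : Type*} {r : V → E → Prop}

lemma HT_key [Fintype V] [Fintype E] {τ : SimpleGraph (V ⊕ E)}
    (hst : IsSpanningTree (BipGraph r) τ) {f : E → ℕ}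
    (hdeg : ∀ a : E, (τ.neighborSet (Sum.inr a)).ncard = f a + 1) (A : Finset E) :
    (∑ a ∈ A, f a) + Nat.card (BipRestrict r τ (↑A : Set E)).ConnectedComponent
      = Nat.card {v : V // ∃ e ∈ (↑A : Set E), r v e} := by
  classical
  set H := BipRestrict r τ (↑A : Set E) with hH
  have hshape : ∀ z w, H.Adj z w → ∃ v a, s(z, w) = s(Sum.inl v, Sum.inr a) := by
    rintro (z | z) (w | w) h <;>
      rcases HT_adj_shape hst.1 (HT_restrict_adj.mp h) with ⟨v, e, h1, h2, _⟩ | ⟨v, e, h1, h2, _⟩ <;>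
        simp [HTi] at h1 h2 <;> try exact ⟨z, w, rfl⟩
    · exact ⟨w, z, Sym2.eq_swap⟩
  have hcount := HT_edge_count H hshape
  have hdeg' : ∀ b : (↑A : Set E), (H.neighborSet (Sum.inr b)).ncard = f b.1 + 1 := by
    intro b
    rw [hH, HT_restrict_nbr_ncard hst.1 (↑A : Set E) b, hdeg]
  have hA1 : Nat.card (↑A : Set E) = A.card := by
    rw [Nat.card_coe_set_eq, Set.ncard_coe_finset]
  have hsum : ∑ b : (↑A : Set E), (H.neighborSet (Sum.inr b)).ncard
      = (∑ a ∈ A, f a) + A.card := by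
    rw [Finset.sum_congr rfl (fun b _ => hdeg' b), Finset.sum_add_distrib]
    congr 1
    · exact Finset.sum_coe_sort A f
    · simp only [Finset.sum_const, Finset.card_univ, smul_eq_mul, mul_one]
      rw [← Nat.card_eq_fintype_card, hA1]
  have hforest := HT_forest_card (H.edgeSet.ncard) H (HT_restrict_acyclic _ hst.2.2) rfl
  have hcardsum : Nat.card ({v : V // ∃ e ∈ (↑A : Set E), r v e} ⊕ (↑A : Set E))
      = Nat.card {v : V // ∃ e ∈ (↑A : Set E), r v e} + A.card := by
    rw [Nat.card_sum, hA1]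
  rw [hcount, hsum] at hforest
  rw [hcardsum] at hforest
  omega

lemma HT_sum_le_mu [Fintype V] [Fintype E] {τ : SimpleGraph (V ⊕ E)}
    (hst : IsSpanningTree (BipGraph r) τ) {f : E → ℕ}
    (hdeg : ∀ a : E, (τ.neighborSet (Sum.inr a)).ncard = f a + 1) (A : Finset E) :
    ∑ a ∈ A, f a ≤ mu r (↑A : Set E) := by
  have hk := HT_key hst hdeg A
  have hmono : Nat.card (BipRestrict r (BipGraph r) (↑A : Set E)).ConnectedComponent
      ≤ Nat.card (BipRestrict r τ (↑A : Set E)).ConnectedComponent :=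
    HT_card_cc_mono (HT_restrict_mono hst.1 _)
  unfold mu
  omega

lemma HT_tight_of_connected [Fintype V] [Fintype E] {τ : SimpleGraph (V ⊕ E)}
    (hst : IsSpanningTree (BipGraph r) τ) {f : E → ℕ}
    (hdeg : ∀ a : E, (τ.neighborSet (Sum.inr a)).ncard = f a + 1) (A : Finset E)
    (hA : A.Nonempty) (hconnres : (BipRestrict r τ (↑A : Set E)).Connected) :
    Tight r f A := by
  have hk := HT_key hst hdeg A
  have hc1 : Nat.card (BipRestrict r τ (↑A : Set E)).ConnectedComponent = 1 :=
    HT_card_cc_connected hconnres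
  have hmono : Nat.card (BipRestrict r (BipGraph r) (↑A : Set E)).ConnectedComponent
      ≤ Nat.card (BipRestrict r τ (↑A : Set E)).ConnectedComponent :=
    HT_card_cc_mono (HT_restrict_mono hst.1 _)
  obtain ⟨a, ha⟩ := hA
  haveI : Nonempty ({v : V // ∃ e ∈ (↑A : Set E), r v e} ⊕ (↑A : Set E)) :=
    ⟨Sum.inr ⟨a, by simpa using ha⟩⟩
  have hpos : 1 ≤ Nat.card (BipRestrict r (BipGraph r) (↑A : Set E)).ConnectedComponent :=
    HT_card_cc_pos _
  unfold Tight mu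
  omega

end C

section D
variable {V E : Type*} {r : V → E → Prop}

/-- predicate: a vertex of `V ⊕ E` belongs to the restricted vertex set of `A` -/
def HTOk (r : V → E → Prop) (A : Set E) : V ⊕ E → Prop :=
  fun z => match z with
  | Sum.inl v => ∃ e ∈ A, r v e
  | Sum.inr a => a ∈ A

/-- the vertex of the restriction corresponding to an `Ok` vertex -/
def HTtoRes (r : V → E → Prop) (A : Set E) :
    (z : V ⊕ E) → HTOk r A z → ({v : V // ∃ e ∈ A, r v e} ⊕ A)
  | Sum.inl v, h => Sum.inl ⟨v, h⟩
  | Sum.inr a, h => Sum.inr ⟨a, h⟩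

lemma HTi_toRes {A : Set E} (z : V ⊕ E) (h : HTOk r A z) :
    HTi r A (HTtoRes r A z h) = z := by
  cases z <;> rfl

lemma HT_lift_reach {τ : SimpleGraph (V ⊕ E)} (A : Set E) :
    ∀ {x y : V ⊕ E} (w : τ.Walk x y), (∀ z ∈ w.support, HTOk r A z) →
      ∀ (hx : HTOk r A x) (hy : HTOk r A y),
      (BipRestrict r τ A).Reachable (HTtoRes r A x hx) (HTtoRes r A y hy) := by
  intro x y w
  induction w with
  | nil => intro _ hx hy; exact Reachable.refl _
  | @cons x u y h p ih =>
    intro hs hx hy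
    have hu : HTOk r A u := hs u (by simp)
    have hstep : (BipRestrict r τ A).Adj (HTtoRes r A x hx) (HTtoRes r A u hu) := by
      rw [HT_restrict_adj, HTi_toRes, HTi_toRes]
      exact h
    exact hstep.reachable.trans (ih (fun z hz => hs z (by simp [hz])) hu hy)

lemma HTOk_HTi {A : Set E} (x : {v : V // ∃ e ∈ A, r v e} ⊕ A) : HTOk r A (HTi r A x) := by
  cases x with
  | inl v => exact v.2
  | inr a => exact a.2

lemma HTtoRes_HTi {A : Set E} (x : {v : V // ∃ e ∈ A, r v e} ⊕ A) (h : HTOk r A (HTi r A x)) :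
    HTtoRes r A (HTi r A x) h = x := by
  cases x <;> rfl

/-- every `V`-vertex reachable in a vertex-deleted subgraph from `inr e'` has an incident
hyperedge also in that reachability class -/
lemma HT_inl_nbr {τ : SimpleGraph (V ⊕ E)} (hle : τ ≤ BipGraph r) {t : V ⊕ E} {e' : E}
    {v : V} (h : (HTDel τ t).Reachable (Sum.inr e') (Sum.inl v)) :
    ∃ a : E, r v a ∧ (HTDel τ t).Reachable (Sum.inr e') (Sum.inr a) := by
  obtain ⟨w⟩ := h
  have w' := w.reverse
  cases hw : w' with
  | cons hadj p =>
    obtain ⟨a, ha, hra⟩ := HT_adj_inl (HTDel_le.trans hle) hadj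
    subst ha
    exact ⟨a, hra, Reachable.trans ⟨w⟩ hadj.reachable⟩

lemma HT_covered [Nonempty E] (hconn : (BipGraph r).Connected) (v : V) :
    ∃ a : E, r v a := by
  obtain ⟨a0⟩ := ‹Nonempty E›
  have h := hconn.preconnected (Sum.inl v) (Sum.inr a0)
  obtain ⟨w⟩ := h
  cases w with
  | cons hadj p =>
    obtain ⟨a, ha, hra⟩ := HT_adj_inl (le_refl (BipGraph r)) hadj
    exact ⟨a, hra⟩

lemma HT_sum_univ [Fintype V] [Fintype E] [Nonempty E] (hconn : (BipGraph r).Connected)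
    {τ : SimpleGraph (V ⊕ E)} (hst : IsSpanningTree (BipGraph r) τ) {f : E → ℕ}
    (hdeg : ∀ a : E, (τ.neighborSet (Sum.inr a)).ncard = f a + 1) :
    (∑ a : E, f a) + 1
      = Nat.card {v : V // ∃ e ∈ (↑(Finset.univ : Finset E) : Set E), r v e} := by
  classical
  have hk := HT_key hst hdeg Finset.univ
  have hcres : (BipRestrict r τ (↑(Finset.univ : Finset E) : Set E)).Connected := by
    rw [connected_iff]
    constructor
    · intro x y
      have hr : τ.Reachable (HTi r _ x) (HTi r _ y) := hst.2.1.preconnected _ _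
      obtain ⟨w⟩ := hr
      have hOk : ∀ z ∈ w.support, HTOk r (↑(Finset.univ : Finset E) : Set E) z := by
        rintro (z | z) _
        · obtain ⟨a, hra⟩ := HT_covered hconn z
          exact ⟨a, by simp, hra⟩
        · simp [HTOk]
      have hlift := HT_lift_reach _ w hOk (HTOk_HTi x) (HTOk_HTi y)
      rw [HTtoRes_HTi, HTtoRes_HTi] at hlift
      exact hlift
    · obtain ⟨a0⟩ := ‹Nonempty E›
      exact ⟨Sum.inr ⟨a0, by simp⟩⟩
  rw [HT_card_cc_connected hcres] at hk
  exact hk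

end D

section T
variable {V E : Type*} {r : V → E → Prop}

lemma HT_transfer_ne {f : E → ℕ} {e e' x : E} (h1 : x ≠ e) (h2 : x ≠ e') :
    Transfer f e e' x = f x := by
  unfold Transfer
  rw [if_neg h1, if_neg h2]

lemma HT_transfer_fst {f : E → ℕ} {e e' : E} : Transfer f e e' e = f e - 1 := by
  unfold Transfer
  rw [if_pos rfl]

lemma HT_transfer_snd {f : E → ℕ} {e e' : E} (h : e' ≠ e) :
    Transfer f e e' e' = f e' + 1 := by
  unfold Transfer
  rw [if_neg h, if_pos rfl]

lemma HT_transfer_comp {f : E → ℕ} {e a e' : E} (hae : a ≠ e) (hae' : a ≠ e')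
    (hee' : e ≠ e') (hfe : 1 ≤ f e) :
    Transfer (Transfer f e a) a e' = Transfer f e e' := by
  funext x
  by_cases hx1 : x = e
  · subst hx1
    rw [HT_transfer_ne (fun h => hae h.symm) hee', HT_transfer_fst, HT_transfer_fst]
  · by_cases hx2 : x = a
    · subst hx2
      rw [HT_transfer_fst, HT_transfer_snd hae, HT_transfer_ne hae hae']
      omega
    · by_cases hx3 : x = e'
      · subst hx3
        rw [HT_transfer_snd hx2, HT_transfer_ne hx1 hx2, HT_transfer_snd hx1]
      · rw [HT_transfer_ne hx2 hx3, HT_transfer_ne hx1 hx3, HT_transfer_ne hx1 hx2]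

lemma HT_sum_transfer_erase {f : E → ℕ} {e e' : E} (h : e ≠ e') (A : Finset E)
    (he'A : e' ∈ A) (heA : e ∉ A) :
    ∑ x ∈ A, Transfer f e e' x = (∑ x ∈ A, f x) + 1 := by
  classical
  rw [← Finset.add_sum_erase _ (Transfer f e e') he'A, ← Finset.add_sum_erase _ f he'A]
  rw [HT_transfer_snd (fun hh => h hh.symm)]
  rw [Finset.sum_congr rfl (fun x hx => HT_transfer_ne
    (fun hh : x = e => heA (hh ▸ Finset.mem_of_mem_erase hx))
    (Finset.ne_of_mem_erase hx))]
  omega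

lemma HT_sum_transfer_univ [Fintype E] {f : E → ℕ} {e e' : E} (h : e ≠ e') (h0 : f e = 0) :
    ∑ a : E, Transfer f e e' a = (∑ a : E, f a) + 1 := by
  classical
  have he : e ∈ Finset.univ := Finset.mem_univ e
  have he' : e' ∈ Finset.univ.erase e := Finset.mem_erase.mpr ⟨fun hh => h hh.symm, Finset.mem_univ _⟩
  rw [← Finset.add_sum_erase _ (Transfer f e e') he, ← Finset.add_sum_erase _ f he]
  rw [← Finset.add_sum_erase _ (Transfer f e e') he', ← Finset.add_sum_erase _ f he']
  rw [HT_transfer_fst, HT_transfer_snd (fun hh => h hh.symm)]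
  rw [Finset.sum_congr rfl (fun x hx => HT_transfer_ne
    (Finset.ne_of_mem_erase (Finset.mem_of_mem_erase hx))
    (Finset.ne_of_mem_erase hx))]
  omega

lemma HT_sum_transfer_eq {f : E → ℕ} {e a : E} (A : Finset E) (heA : e ∈ A) (haA : a ∉ A)
    (hea : e ≠ a) (hfe : 1 ≤ f e) :
    (∑ x ∈ A, f x) = (∑ x ∈ A, Transfer f e a x) + 1 := by
  classical
  rw [← Finset.add_sum_erase _ (Transfer f e a) heA, ← Finset.add_sum_erase _ f heA]
  rw [HT_transfer_fst]
  rw [Finset.sum_congr rfl (fun x hx => HT_transfer_ne (Finset.ne_of_mem_erase hx)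
    (fun hh : x = a => haA (hh ▸ Finset.mem_of_mem_erase hx)))]
  omega

lemma HT_sum_transfer_eq' {f : E → ℕ} {e a : E} (A : Finset E) (heA : e ∉ A) (haA : a ∉ A) :
    (∑ x ∈ A, Transfer f e a x) = ∑ x ∈ A, f x :=
  Finset.sum_congr rfl (fun x hx => HT_transfer_ne
    (fun hh : x = e => heA (hh ▸ hx)) (fun hh : x = a => haA (hh ▸ hx)))

end T

section M
variable {V E : Type*} {r : V → E → Prop}

lemma HT_fromEdge_le {v : V} {a : E} (hr : r v a) :
    fromEdgeSet {s(Sum.inl v, Sum.inr a)} ≤ BipGraph r := by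
  intro z w h
  rw [fromEdgeSet_adj] at h
  obtain ⟨h1, _⟩ := h
  rw [Set.mem_singleton_iff, Sym2.eq_iff] at h1
  rcases h1 with ⟨rfl, rfl⟩ | ⟨rfl, rfl⟩
  · exact Or.inl ⟨v, a, rfl, rfl, hr⟩
  · exact Or.inr ⟨v, a, rfl, rfl, hr⟩

lemma HT_nbr_swap [DecidableEq E] {τ : SimpleGraph (V ⊕ E)} (hle : τ ≤ BipGraph r) {c : E} {u0 : V ⊕ E}
    (hadj : τ.Adj (Sum.inr c) u0) (v : V) (a : E) (b : E) :
    ((τ.deleteEdges {s(Sum.inr c, u0)}) ⊔ fromEdgeSet {s(Sum.inl v, Sum.inr a)}).neighborSet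
        (Sum.inr b)
      = ((τ.neighborSet (Sum.inr b)) \ (if b = c then {u0} else ∅))
          ∪ (if b = a then {Sum.inl v} else ∅) := by
  obtain ⟨v0, hv0, _⟩ := HT_adj_inr hle hadj
  ext w
  simp only [mem_neighborSet, sup_adj, deleteEdges_adj, fromEdgeSet_adj,
    Set.mem_singleton_iff, Set.mem_union, Set.mem_diff]
  constructor
  · rintro (⟨hA, hne⟩ | ⟨heq, hne2⟩)
    · refine Or.inl ⟨hA, ?_⟩
      split_ifs with hbc
      · subst hbc
        simp only [Set.mem_singleton_iff]
        intro hw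
        exact hne (by rw [hw])
      · simp
    · rw [Sym2.eq_iff] at heq
      rcases heq with ⟨h1, h2⟩ | ⟨h1, h2⟩
      · exact absurd h1 (by simp)
      · rw [Sum.inr.injEq] at h1
        subst h1; subst h2
        rw [if_pos rfl]
        exact Or.inr rfl
  · rintro (⟨hw, hD⟩ | hI)
    · refine Or.inl ⟨hw, ?_⟩
      intro hcontra
      rw [Sym2.eq_iff] at hcontra
      rcases hcontra with ⟨h1, h2⟩ | ⟨h1, h2⟩
      · rw [Sum.inr.injEq] at h1
        subst h1; subst h2
        rw [if_pos rfl] at hD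
        exact hD rfl
      · rw [hv0] at h1
        exact absurd h1 (by simp)
    · by_cases hba : b = a
      · subst hba
        rw [if_pos rfl, Set.mem_singleton_iff] at hI
        subst hI
        refine Or.inr ⟨Sym2.eq_swap, by simp⟩
      · rw [if_neg hba] at hI
        exact absurd hI (Set.notMem_empty _)

lemma HT_main [Fintype V] [Fintype E] (r : V → E → Prop) :
    ∀ (n : ℕ) (f : E → ℕ) (τ : SimpleGraph (V ⊕ E)),
      IsSpanningTree (BipGraph r) τ →
      (∀ a : E, (τ.neighborSet (Sum.inr a)).ncard = f a + 1) →
      ∀ e e' : E, e ≠ e' → 1 ≤ f e →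
      ({x : V ⊕ E | (HTDel τ (Sum.inr e)).Reachable (Sum.inr e') x}).ncard ≤ n →
      IsHypertree r (Transfer f e e') ∨ ∃ A : Finset E, Tight r f A ∧ e' ∈ A ∧ e ∉ A := by
  intro n
  induction n with
  | zero =>
    intro f τ hst hdeg e e' hee' hfe hC
    exfalso
    have hmem : (Sum.inr e' : V ⊕ E)
        ∈ {x : V ⊕ E | (HTDel τ (Sum.inr e)).Reachable (Sum.inr e') x} := Reachable.refl _
    have hpos := (Set.ncard_pos (Set.toFinite _)).mpr ⟨_, hmem⟩
    omega
  | succ n ih =>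
    intro f τ hst hdeg e e' hee' hfe hC
    classical
    set C := {x : V ⊕ E | (HTDel τ (Sum.inr e)).Reachable (Sum.inr e') x} with hCdef
    set A : Finset E := Finset.univ.filter (fun a => Sum.inr a ∈ C) with hAdef
    have hmemA : ∀ a : E, a ∈ A ↔ (Sum.inr a : V ⊕ E) ∈ C := by
      intro a; simp [hAdef]
    have he'A : e' ∈ A := (hmemA e').mpr (Reachable.refl _)
    have heC : (Sum.inr e : V ⊕ E) ∉ C := by
      intro h
      have h2 := HT_eq_of_reach_isolated (fun w => HTDel_isolated) (Reachable.symm h)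
      rw [Sum.inr.injEq] at h2
      exact hee' h2
    have heA : e ∉ A := fun h => heC ((hmemA e).mp h)
    by_cases hcase1 : ∀ v : V, (∃ a ∈ A, r v a) → (Sum.inl v : V ⊕ E) ∈ C
    · right
      refine ⟨A, ?_, he'A, heA⟩
      refine HT_tight_of_connected hst hdeg A ⟨e', he'A⟩ ?_
      rw [connected_iff]
      refine ⟨?_, ⟨Sum.inr ⟨e', by simpa using he'A⟩⟩⟩
      intro x y
      have hιC : ∀ z : ({v : V // ∃ e ∈ (↑A : Set E), r v e} ⊕ (↑A : Set E)),
          HTi r _ z ∈ C := by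
        rintro (⟨v, hv⟩ | ⟨a, ha⟩)
        · exact hcase1 v (by simpa using hv)
        · exact (hmemA a).mp (by simpa using ha)
      have hreach' : (HTDel τ (Sum.inr e)).Reachable (HTi r _ x) (HTi r _ y) :=
        (hιC x).symm.trans (hιC y)
      obtain ⟨w0⟩ := hreach'
      have hsub : ∀ ed ∈ w0.edges, ed ∈ τ.edgeSet :=
        fun ed hed => (edgeSet_mono HTDel_le) (w0.edges_subset_edgeSet hed)
      have hOk : ∀ z ∈ (w0.transfer τ hsub).support, HTOk r (↑A : Set E) z := by
        intro z hz
        rw [Walk.support_transfer] at hz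
        have hzC : z ∈ C := Reachable.trans (hιC x) ⟨w0.takeUntil z hz⟩
        cases z with
        | inr a => exact Finset.mem_coe.mpr ((hmemA a).mpr hzC)
        | inl v =>
          obtain ⟨a, hra, hreach⟩ := HT_inl_nbr hst.1 hzC
          exact ⟨a, Finset.mem_coe.mpr ((hmemA a).mpr hreach), hra⟩
      have hlift := HT_lift_reach _ (w0.transfer τ hsub) hOk (HTOk_HTi x) (HTOk_HTi y)
      rw [HTtoRes_HTi, HTtoRes_HTi] at hlift
      exact hlift
    · push_neg at hcase1
      obtain ⟨v, ⟨a, haA, hrva⟩, hvC⟩ := hcase1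
      have haC : (Sum.inr a : V ⊕ E) ∈ C := (hmemA a).mp haA
      have hane : a ≠ e := fun h => heC (h ▸ haC)
      have hvia : ¬ τ.Adj (Sum.inl v) (Sum.inr a) := by
        intro h
        apply hvC
        refine Reachable.trans haC (Adj.reachable ?_)
        rw [HTDel_adj]
        refine ⟨h.symm, ?_, by simp⟩
        simp only [ne_eq, Sum.inr.injEq]
        exact fun hh => hane hh.symm
      have hre_v : τ.Reachable (Sum.inr e) (Sum.inl v) := hst.2.1.preconnected _ _
      obtain ⟨uD, haduD, hreachuD⟩ := HT_first_step (by simp) hre_v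
      -- τ₂ : transfer one unit from e to a
      have hDelLeσ1 : HTDel τ (Sum.inr e) ≤ τ.deleteEdges {s(Sum.inr e, uD)} :=
        HTDel_le_deleteEdges
      have hsep2 : ¬ (τ.deleteEdges {s(Sum.inr e, uD)}).Reachable (Sum.inl v) (Sum.inr a) := by
        intro hR
        obtain ⟨w⟩ := hR
        rcases Classical.em ((Sum.inr e : V ⊕ E) ∈ w.support) with hmem | hmem
        · have h1 : (τ.deleteEdges {s(Sum.inr e, uD)}).Reachable (Sum.inl v) (Sum.inr e) :=
            HT_reach_take w hmem
          exact HT_bridge_of_acyclic hst.2.2 haduD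
            (h1.symm.trans (hreachuD.mono hDelLeσ1).symm)
        · have hsubw : ∀ ed ∈ w.edges, ed ∈ (HTDel τ (Sum.inr e)).edgeSet := by
            intro ed hed
            have h1 := w.edges_subset_edgeSet hed
            rw [edgeSet_deleteEdges] at h1
            have h2 : (Sum.inr e : V ⊕ E) ∉ ed :=
              fun hc => hmem (HT_mem_support_of_mem_edges hed hc)
            rw [HTDel, edgeSet_deleteEdges]
            exact ⟨h1.1, h2⟩
          have hva : (HTDel τ (Sum.inr e)).Reachable (Sum.inl v) (Sum.inr a) :=
            ⟨w.transfer _ hsubw⟩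
          exact hvC (haC.trans hva.symm)
      have hconn2 := HT_connected_swap hst.2.1 haduD hsep2
      have hacy2 := HT_acyclic_add_edge (HT_acyclic_mono (deleteEdges_le _) hst.2.2)
        (by simp) hsep2
      have hle2 : (τ.deleteEdges {s(Sum.inr e, uD)} ⊔ fromEdgeSet {s(Sum.inl v, Sum.inr a)})
          ≤ BipGraph r := sup_le ((deleteEdges_le _).trans hst.1) (HT_fromEdge_le hrva)
      set τ2 := τ.deleteEdges {s(Sum.inr e, uD)} ⊔ fromEdgeSet {s(Sum.inl v, Sum.inr a)}
        with hτ2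
      have hst2 : IsSpanningTree (BipGraph r) τ2 := ⟨hle2, hconn2, hacy2⟩
      have hdeg2 : ∀ b : E, (τ2.neighborSet (Sum.inr b)).ncard = Transfer f e a b + 1 := by
        intro b
        rw [hτ2, HT_nbr_swap hst.1 haduD v a b]
        by_cases hba : b = a
        · subst hba
          rw [if_neg hane, if_pos rfl, Set.diff_empty, Set.union_singleton]
          have hnm : Sum.inl v ∉ τ.neighborSet (Sum.inr b) :=
            fun h => hvia ((τ.mem_neighborSet _ _).mp h).symm
          rw [Set.ncard_insert_of_notMem hnm (Set.toFinite _)]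
          rw [hdeg, HT_transfer_snd hane]
        · by_cases hbe : b = e
          · subst hbe
            rw [if_pos rfl, if_neg hba, Set.union_empty]
            have hm : uD ∈ τ.neighborSet (Sum.inr b) := haduD
            rw [Set.ncard_diff_singleton_of_mem hm, hdeg, HT_transfer_fst]
            omega
          · rw [if_neg hbe, if_neg hba, Set.diff_empty, Set.union_empty, hdeg,
              HT_transfer_ne hbe hba]
      by_cases hae' : a = e'
      · left
        subst hae'
        exact ⟨τ2, hst2, hdeg2⟩
      · by_cases hcase2 : (HTDel τ (Sum.inr a)).Reachable (Sum.inr e') (Sum.inr e)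
        · -- Move 1 : swap within the tree, keep f, shrink C
          obtain ⟨w0, hadw0, hreachw0⟩ := HT_first_step
            (show (Sum.inr a : V ⊕ E) ≠ Sum.inr e by simp [hane]) (hst.2.1.preconnected _ _)
          have hDelaLe : HTDel τ (Sum.inr a) ≤ τ.deleteEdges {s(Sum.inr a, w0)} :=
            HTDel_le_deleteEdges
          have hbr2 : ¬ (τ.deleteEdges {s(Sum.inr a, w0)}).Reachable (Sum.inr a) w0 :=
            HT_bridge_of_acyclic hst.2.2 hadw0
          have hsep3 : ¬ (τ.deleteEdges {s(Sum.inr a, w0)}).Reachable (Sum.inl v)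
              (Sum.inr a) := by
            intro hR
            obtain ⟨w⟩ := hR
            rcases Classical.em ((Sum.inr e : V ⊕ E) ∈ w.support) with hmem | hmem
            · have h2 : (τ.deleteEdges {s(Sum.inr a, w0)}).Reachable (Sum.inr e) (Sum.inr a) :=
                HT_reach_drop w hmem
              exact hbr2 (h2.symm.trans (hreachw0.mono hDelaLe).symm)
            · have hsubw : ∀ ed ∈ w.edges, ed ∈ (HTDel τ (Sum.inr e)).edgeSet := by
                intro ed hed
                have h1 := w.edges_subset_edgeSet hed
                rw [edgeSet_deleteEdges] at h1
                have h2 : (Sum.inr e : V ⊕ E) ∉ ed :=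
                  fun hc => hmem (HT_mem_support_of_mem_edges hed hc)
                rw [HTDel, edgeSet_deleteEdges]
                exact ⟨h1.1, h2⟩
              have hva : (HTDel τ (Sum.inr e)).Reachable (Sum.inl v) (Sum.inr a) :=
                ⟨w.transfer _ hsubw⟩
              exact hvC (haC.trans hva.symm)
          have hconn3 := HT_connected_swap hst.2.1 hadw0 hsep3
          have hacy3 := HT_acyclic_add_edge (HT_acyclic_mono (deleteEdges_le _) hst.2.2)
            (by simp) hsep3
          have hle3 : (τ.deleteEdges {s(Sum.inr a, w0)} ⊔ fromEdgeSet {s(Sum.inl v, Sum.inr a)})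
              ≤ BipGraph r := sup_le ((deleteEdges_le _).trans hst.1) (HT_fromEdge_le hrva)
          set τ3 := τ.deleteEdges {s(Sum.inr a, w0)} ⊔ fromEdgeSet {s(Sum.inl v, Sum.inr a)}
            with hτ3
          have hst3 : IsSpanningTree (BipGraph r) τ3 := ⟨hle3, hconn3, hacy3⟩
          have hdeg3 : ∀ b : E, (τ3.neighborSet (Sum.inr b)).ncard = f b + 1 := by
            intro b
            rw [hτ3, HT_nbr_swap hst.1 hadw0 v a b]
            by_cases hba : b = a
            · subst hba
              rw [if_pos rfl, if_pos rfl, Set.union_singleton]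
              have hnm : Sum.inl v ∉ τ.neighborSet (Sum.inr b) \ {w0} :=
                fun h => hvia ((τ.mem_neighborSet _ _).mp h.1).symm
              have hw0m : w0 ∈ τ.neighborSet (Sum.inr b) := (τ.mem_neighborSet _ _).mpr hadw0
              rw [Set.ncard_insert_of_notMem hnm (Set.toFinite _),
                Set.ncard_diff_singleton_of_mem hw0m, hdeg]
              omega
            · rw [if_neg hba, if_neg hba, Set.diff_empty, Set.union_empty, hdeg]
          have hnota3 : ¬ (HTDel τ3 (Sum.inr e)).Reachable (Sum.inr e') (Sum.inr a) := by
            intro hR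
            rcases HT_reach_delete_or (Sum.inr a) (Sum.inl v) hR with hA2 | hB2
            · have hH3le : ((HTDel τ3 (Sum.inr e)).deleteEdges {s(Sum.inr a, Sum.inl v)})
                  ≤ τ.deleteEdges {s(Sum.inr a, w0)} := by
                intro z z' h
                rw [deleteEdges_adj] at h
                obtain ⟨h1, h2⟩ := h
                rw [HTDel_adj] at h1
                obtain ⟨h1, hne1, hne2⟩ := h1
                rw [hτ3] at h1
                rcases (sup_adj _ _ _ _).mp h1 with h4 | h4
                · exact h4
                · exfalso
                  rw [fromEdgeSet_adj, Set.mem_singleton_iff] at h4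
                  exact h2 (by rw [h4.1]; exact Set.mem_singleton_iff.mpr Sym2.eq_swap)
              have h1' := hA2.mono hH3le
              have h2' := hcase2.mono hDelaLe
              exact hbr2 ((h1'.symm.trans h2').trans (hreachw0.mono hDelaLe).symm)
            · have hH3le' : ((HTDel τ3 (Sum.inr e)).deleteEdges {s(Sum.inr a, Sum.inl v)})
                  ≤ HTDel τ (Sum.inr e) := by
                intro z z' h
                rw [deleteEdges_adj] at h
                obtain ⟨h1, h2⟩ := h
                rw [HTDel_adj] at h1 ⊢
                obtain ⟨h1, hne1, hne2⟩ := h1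
                rw [hτ3] at h1
                rcases (sup_adj _ _ _ _).mp h1 with h4 | h4
                · rw [deleteEdges_adj] at h4
                  exact ⟨h4.1, hne1, hne2⟩
                · exfalso
                  rw [fromEdgeSet_adj, Set.mem_singleton_iff] at h4
                  exact h2 (by rw [h4.1]; exact Set.mem_singleton_iff.mpr Sym2.eq_swap)
              exact hvC (hB2.mono hH3le')
          have hsubC3 : {x : V ⊕ E | (HTDel τ3 (Sum.inr e)).Reachable (Sum.inr e') x} ⊆ C := by
            intro x hx
            obtain ⟨w⟩ := hx
            rcases Classical.em ((Sum.inr a : V ⊕ E) ∈ w.support) with hmem | hmem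
            · exact absurd (HT_reach_take w hmem) hnota3
            · have hsubw : ∀ ed ∈ w.edges, ed ∈ (HTDel τ (Sum.inr e)).edgeSet := by
                intro ed hed
                have h1 := w.edges_subset_edgeSet hed
                rw [HTDel, edgeSet_deleteEdges] at h1
                obtain ⟨h1, h2⟩ := h1
                rw [hτ3, edgeSet_sup, edgeSet_deleteEdges, edgeSet_fromEdgeSet] at h1
                have h3 : (Sum.inr a : V ⊕ E) ∉ ed :=
                  fun hc => hmem (HT_mem_support_of_mem_edges hed hc)
                rw [HTDel, edgeSet_deleteEdges]
                rcases h1 with ⟨h4, _⟩ | ⟨h4, _⟩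
                · exact ⟨h4, h2⟩
                · exfalso
                  rw [Set.mem_singleton_iff] at h4
                  exact h3 (h4 ▸ (by simp : (Sum.inr a : V ⊕ E) ∈ s(Sum.inl v, Sum.inr a)))
              exact ⟨w.transfer _ hsubw⟩
          have hmeas3 : ({x : V ⊕ E |
              (HTDel τ3 (Sum.inr e)).Reachable (Sum.inr e') x}).ncard ≤ n := by
            have hnota3' : (Sum.inr a : V ⊕ E)
                ∉ {x : V ⊕ E | (HTDel τ3 (Sum.inr e)).Reachable (Sum.inr e') x} := hnota3
            have hss : {x : V ⊕ E | (HTDel τ3 (Sum.inr e)).Reachable (Sum.inr e') x} ⊂ C :=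
              hsubC3.ssubset_of_ne (fun h => hnota3' (h ▸ haC))
            have := Set.ncard_lt_ncard hss (Set.toFinite _)
            omega
          exact ih f τ3 hst3 hdeg3 e e' hee' hfe hmeas3
        · -- Move 2 : recurse with τ2 and Transfer f e a
          have hnota : (Sum.inr a : V ⊕ E)
              ∉ {x : V ⊕ E | (HTDel τ2 (Sum.inr a)).Reachable (Sum.inr e') x} := by
            intro h
            have h2 := HT_eq_of_reach_isolated (fun w => HTDel_isolated) (Reachable.symm h)
            rw [Sum.inr.injEq] at h2
            exact hae' h2
          have hsubC : {x : V ⊕ E | (HTDel τ2 (Sum.inr a)).Reachable (Sum.inr e') x} ⊆ C := by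
            intro x hx
            obtain ⟨w⟩ := hx
            rcases Classical.em ((Sum.inr e : V ⊕ E) ∈ w.support) with hmem | hmem
            · exfalso
              have h1 : (HTDel τ2 (Sum.inr a)).Reachable (Sum.inr e') (Sum.inr e) :=
                HT_reach_take w hmem
              have hle' : HTDel τ2 (Sum.inr a) ≤ HTDel τ (Sum.inr a) := by
                intro z z' hzz
                rw [HTDel_adj] at hzz ⊢
                obtain ⟨h1', h2', h3'⟩ := hzz
                rw [hτ2] at h1'
                rcases (sup_adj _ _ _ _).mp h1' with h4 | h4
                · rw [deleteEdges_adj] at h4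
                  exact ⟨h4.1, h2', h3'⟩
                · exfalso
                  rw [fromEdgeSet_adj, Set.mem_singleton_iff, Sym2.eq_iff] at h4
                  rcases h4.1 with ⟨hz1, hz2⟩ | ⟨hz1, hz2⟩
                  · exact h3' hz2.symm
                  · exact h2' hz1.symm
              exact hcase2 (h1.mono hle')
            · have hsubw : ∀ ed ∈ w.edges, ed ∈ (HTDel τ (Sum.inr e)).edgeSet := by
                intro ed hed
                have h1 := w.edges_subset_edgeSet hed
                rw [HTDel, edgeSet_deleteEdges] at h1
                obtain ⟨h1, h2⟩ := h1
                rw [hτ2, edgeSet_sup, edgeSet_deleteEdges, edgeSet_fromEdgeSet] at h1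
                have h3 : (Sum.inr e : V ⊕ E) ∉ ed :=
                  fun hc => hmem (HT_mem_support_of_mem_edges hed hc)
                rw [HTDel, edgeSet_deleteEdges]
                rcases h1 with ⟨h4, _⟩ | ⟨h4, _⟩
                · exact ⟨h4, h3⟩
                · exfalso
                  rw [Set.mem_singleton_iff] at h4
                  exact h2 (h4 ▸ (by simp : (Sum.inr a : V ⊕ E) ∈ s(Sum.inl v, Sum.inr a)))
              exact ⟨w.transfer _ hsubw⟩
          have hmeas : ({x : V ⊕ E | (HTDel τ2 (Sum.inr a)).Reachable (Sum.inr e') x}).ncard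
              ≤ n := by
            have hss : {x : V ⊕ E | (HTDel τ2 (Sum.inr a)).Reachable (Sum.inr e') x} ⊂ C :=
              hsubC.ssubset_of_ne (fun h => hnota (h ▸ haC))
            have := Set.ncard_lt_ncard hss (Set.toFinite _)
            omega
          have hrec := ih (Transfer f e a) τ2 hst2 hdeg2 a e' hae'
            (by rw [HT_transfer_snd hane]; omega) hmeas
          rcases hrec with hL | ⟨A2, ht2, he'2, ha2⟩
          · left
            rwa [HT_transfer_comp hane hae' hee' hfe] at hL
          · by_cases heA2 : e ∈ A2
            · exfalso
              have h1 := HT_sum_le_mu hst hdeg A2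
              unfold Tight at ht2
              have h2 := HT_sum_transfer_eq (f := f) A2 heA2 ha2 (fun h => hane h.symm) hfe
              omega
            · right
              refine ⟨A2, ?_, he'2, heA2⟩
              unfold Tight at ht2 ⊢
              rw [← HT_sum_transfer_eq' (f := f) (e := e) (a := a) A2 heA2 ha2]
              exact ht2

end M


/-- `e` is internally inactive w.r.t. `f` iff `f e ≠ 0` and there is `e' < e`
such that every subset containing `e'` but not `e` is not tight at `f`. -/
theorem internally_inactive_iff {V E : Type*} [Fintype V] [Fintype E] [LinearOrder E]
    (r : V → E → Prop) (hconn : (BipGraph r).Connected) (f : E → ℕ) (hf : IsHypertree r f)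
    (e : E) :
    (∃ e', e' < e ∧ IsHypertree r (Transfer f e e')) ↔
      (f e ≠ 0 ∧ ∃ e', e' < e ∧ ∀ E' : Finset E, e' ∈ E' → e ∉ E' → ¬ Tight r f E') := by
  classical
  obtain ⟨τf, hstf, hdegf⟩ := hf
  haveI : Nonempty E := ⟨e⟩
  constructor
  · rintro ⟨e', hlt, hht⟩
    obtain ⟨τg, hstg, hdegg⟩ := hht
    have hne : e ≠ e' := hlt.ne'
    have hsf := HT_sum_univ hconn hstf hdegf
    have hsg := HT_sum_univ hconn hstg hdegg
    have hfe : f e ≠ 0 := by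
      intro h0
      have hsum := HT_sum_transfer_univ (f := f) hne h0
      omega
    refine ⟨hfe, e', hlt, ?_⟩
    intro E' hmem hnmem htight
    have hle := HT_sum_le_mu hstg hdegg E'
    have hsum := HT_sum_transfer_erase (f := f) hne E' hmem hnmem
    unfold Tight at htight
    omega
  · rintro ⟨hfe, e', hlt, hA⟩
    have hres := HT_main r
      (({x : V ⊕ E | (HTDel τf (Sum.inr e)).Reachable (Sum.inr e') x}).ncard)
      f τf hstf hdegf e e' hlt.ne' (by omega) le_rfl
    rcases hres with h | ⟨A, ht, hmem, hnmem⟩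
    · exact ⟨e', hlt, h⟩
    · exact absurd ht (hA A hmem hnmem)
end

section
/- Let G be a connected bipartite graph with colour classes V and E such that G − e is connected for every e ∈ E. Then the coefficient of the linear term of the exterior polynomial X_G(y) equals |V| − 1; that is, the number of hypertrees of G with exactly one externally inactive hyperedge (for any fixed order on E) is |V| − 1. -/
open SimpleGraph

variable {V E : Type*}

namespace HyperProof

variable {α : Type*}

/-- Walk-induction step for edge deletion. -/
lemma reach_del_aux (G : SimpleGraph α) (x y : α) {u w : α} (p : G.Walk u w)
    (h : (G.deleteEdges {s(x,y)}).Reachable x u ∨ (G.deleteEdges {s(x,y)}).Reachable y u) :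
    (G.deleteEdges {s(x,y)}).Reachable x w ∨ (G.deleteEdges {s(x,y)}).Reachable y w := by
  induction p with
  | nil => exact h
  | @cons u c w hadj p ih =>
    apply ih
    by_cases he : s(u, c) = s(x, y)
    · rw [Sym2.eq_iff] at he
      rcases he with ⟨rfl, rfl⟩ | ⟨rfl, rfl⟩
      · exact Or.inr (Reachable.refl _)
      · exact Or.inl (Reachable.refl _)
    · have hadj' : (G.deleteEdges {s(x,y)}).Adj u c := by
        rw [deleteEdges_adj]; exact ⟨hadj, by simpa using he⟩
      rcases h with h | h
      · exact Or.inl (h.trans hadj'.reachable)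
      · exact Or.inr (h.trans hadj'.reachable)

lemma reach_del_of_preconnected {G : SimpleGraph α} (h : G.Preconnected) (x y w : α) :
    (G.deleteEdges {s(x,y)}).Reachable x w ∨ (G.deleteEdges {s(x,y)}).Reachable y w := by
  obtain ⟨p⟩ := h x w
  exact reach_del_aux G x y p (Or.inl (Reachable.refl _))

lemma exists_cross_edge {G : SimpleGraph α} {s t : α} (h : G.Reachable s t)
    (P : α → Prop) (hs : P s) (ht : ¬ P t) :
    ∃ a b, G.Adj a b ∧ P a ∧ ¬ P b := by
  obtain ⟨p⟩ := h
  induction p with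
  | nil => exact absurd hs ht
  | @cons u c w hadj p ih =>
    by_cases hc : P c
    · exact ih hc ht
    · exact ⟨u, c, hadj, hs, hc⟩

/-- If `x,y` are reachable in `G - xy`, deleting the edge preserves reachability. -/
lemma reach_del_of_reach {G : SimpleGraph α} {x y : α}
    (hxy : (G.deleteEdges {s(x,y)}).Reachable x y) {a b : α} (h : G.Reachable a b) :
    (G.deleteEdges {s(x,y)}).Reachable a b := by
  obtain ⟨p⟩ := h
  induction p with
  | nil => exact Reachable.refl _
  | @cons u c w hadj p ih =>
    refine Reachable.trans ?_ ih
    by_cases he : s(u, c) = s(x, y)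
    · rw [Sym2.eq_iff] at he
      rcases he with ⟨rfl, rfl⟩ | ⟨rfl, rfl⟩
      · exact hxy
      · exact hxy.symm
    · exact Adj.reachable (by rw [deleteEdges_adj]; exact ⟨hadj, by simpa using he⟩)

lemma exists_spanning_tree [Fintype α] :
    ∀ (n : ℕ) (G : SimpleGraph α), G.edgeSet.ncard ≤ n → G.Connected →
      ∃ τ, τ ≤ G ∧ τ.IsTree := by
  intro n
  induction n with
  | zero =>
    intro G hn hG
    have hemp : G.edgeSet = ∅ := by
      have := Set.ncard_eq_zero (s := G.edgeSet) (Set.toFinite _)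
      rw [← this]; omega
    have : G = ⊥ := by rwa [edgeSet_eq_empty] at hemp
    exact ⟨G, le_refl _, hG, this ▸ isAcyclic_bot⟩
  | succ n ih =>
    intro G hn hG
    by_cases hac : G.IsAcyclic
    · exact ⟨G, le_refl _, hG, hac⟩
    · rw [isAcyclic_iff_forall_edge_isBridge] at hac
      push_neg at hac
      obtain ⟨e, he, hbr⟩ := hac
      induction e using Sym2.ind with
      | _ x y =>
      rw [isBridge_iff] at hbr
      push_neg at hbr
      have hreach : (G.deleteEdges {s(x,y)}).Reachable x y := hbr
      set K := G.deleteEdges {s(x,y)} with hK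
      have hKconn : K.Connected := by
        haveI : Nonempty α := hG.nonempty
        exact Connected.mk (fun a b => reach_del_of_reach hreach (hG.preconnected a b))
      have hKcard : K.edgeSet.ncard ≤ n := by
        have hsub : K.edgeSet ⊂ G.edgeSet := by
          rw [hK, edgeSet_deleteEdges]
          exact Set.sdiff_singleton_ssubset.mpr he
        have := Set.ncard_lt_ncard hsub (Set.toFinite _)
        omega
      obtain ⟨τ, hτle, hτ⟩ := ih K hKcard hKconn
      exact ⟨τ, le_trans hτle (deleteEdges_le _), hτ⟩


lemma ncard_edgeSet_of_isTree [Fintype α] {τ : SimpleGraph α} (h : τ.IsTree) :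
    τ.edgeSet.ncard + 1 = Fintype.card α := by
  classical
  letI : Fintype τ.edgeSet := (Set.toFinite _).fintype
  have := h.card_edgeFinset
  rwa [Set.ncard_eq_toFinset_card' , ← edgeFinset] at *

lemma isTree_of_connected_of_card [Fintype α] {G : SimpleGraph α} (h : G.Connected)
    (hc : G.edgeSet.ncard + 1 ≤ Fintype.card α) : G.IsTree := by
  obtain ⟨τ, hle, htree⟩ := exists_spanning_tree G.edgeSet.ncard G (le_refl _) h
  have hsub : τ.edgeSet ⊆ G.edgeSet := edgeSet_subset_edgeSet.mpr hle
  have h1 : τ.edgeSet.ncard + 1 = Fintype.card α := ncard_edgeSet_of_isTree htree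
  have h2 : G.edgeSet.ncard ≤ τ.edgeSet.ncard := by omega
  have : G.edgeSet = τ.edgeSet := (Set.eq_of_subset_of_ncard_le hsub h2 (Set.toFinite _)).symm
  rwa [edgeSet_inj.mp this]

end HyperProof

namespace HyperProof
section Bip
set_option linter.unusedSectionVars false

variable {V E : Type*} [Fintype V] [Fintype E] {r : V → E → Prop}

lemma bip_shape {τ : SimpleGraph (V ⊕ E)} (hle : τ ≤ BipGraph r) {x y : V ⊕ E}
    (h : τ.Adj x y) : ∃ v e, r v e ∧ (x = Sum.inl v ∧ y = Sum.inr e ∨ x = Sum.inr e ∧ y = Sum.inl v) := by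
  have := hle h
  rcases this with ⟨v, e, rfl, rfl, hr⟩ | ⟨v, e, rfl, rfl, hr⟩
  · exact ⟨v, e, hr, Or.inl ⟨rfl, rfl⟩⟩
  · exact ⟨v, e, hr, Or.inr ⟨rfl, rfl⟩⟩

/-- The degree of a hyperedge vertex in a subgraph of the bipartite graph. -/
noncomputable def degE (τ : SimpleGraph (V ⊕ E)) (e : E) : ℕ :=
  (τ.neighborSet (Sum.inr e)).ncard

lemma sum_degE {τ : SimpleGraph (V ⊕ E)} (hle : τ ≤ BipGraph r) :
    ∑ e : E, degE τ e = τ.edgeSet.ncard := by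
  classical
  have h1 : ∑ e : E, degE τ e
      = (Finset.univ.sigma (fun e : E => (τ.neighborSet (Sum.inr e)).toFinset)).card := by
    rw [Finset.card_sigma]
    refine Finset.sum_congr rfl (fun e _ => ?_)
    rw [degE, Set.ncard_eq_toFinset_card']
  rw [h1, Set.ncard_eq_toFinset_card']
  refine Finset.card_bij (fun p _ => s(Sum.inr p.1, p.2)) ?_ ?_ ?_
  · rintro ⟨e, x⟩ hp
    simp only [Finset.mem_sigma, Set.mem_toFinset, mem_neighborSet] at hp ⊢
    exact hp.2
  · rintro ⟨e, x⟩ hp ⟨e', x'⟩ hp' heq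
    simp only [Finset.mem_sigma, Set.mem_toFinset, mem_neighborSet] at hp hp'
    rw [Sym2.eq_iff] at heq
    dsimp only at heq
    rcases heq with ⟨he, hx⟩ | ⟨he, hx⟩
    · obtain rfl : e = e' := by simpa using he
      obtain rfl : x = x' := hx
      rfl
    · exfalso
      obtain ⟨v, e'', hr, h⟩ := bip_shape hle hp'.2
      rcases h with ⟨h1, h2⟩ | ⟨h1, h2⟩
      · exact absurd h1 (by simp)
      · rw [h2] at he; simp at he
  · intro q hq
    simp only [Set.mem_toFinset] at hq
    induction q using Sym2.ind with
    | _ a b =>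
      rw [mem_edgeSet] at hq
      obtain ⟨v, e, hr, h⟩ := bip_shape hle hq
      rcases h with ⟨rfl, rfl⟩ | ⟨rfl, rfl⟩
      · exact ⟨⟨e, Sum.inl v⟩, by simp [hq.symm], Sym2.eq_swap⟩
      · exact ⟨⟨e, Sum.inl v⟩, by simp [hq], rfl⟩

lemma neighbor_nonempty {α : Type*} [Fintype α] {G : SimpleGraph α} (hG : G.Connected)
    (hcard : 1 < Fintype.card α) (x : α) : 0 < (G.neighborSet x).ncard := by
  obtain ⟨y, hy⟩ := Fintype.exists_ne_of_one_lt_card hcard x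
  obtain ⟨p⟩ := hG.preconnected x y
  rw [Set.ncard_pos (Set.toFinite _)]
  cases p with
  | nil => exact absurd rfl hy
  | cons h p => exact ⟨_, h⟩

lemma hypertree_sum [Nonempty V] [Nonempty E] {f : E → ℕ} (hf : IsHypertree r f) :
    ∑ e : E, f e = Fintype.card V - 1 ∧ 1 ≤ Fintype.card V := by
  obtain ⟨τ, ⟨hle, hconn, hacy⟩, hdeg⟩ := hf
  have htree : τ.IsTree := ⟨hconn, hacy⟩
  have hcard := ncard_edgeSet_of_isTree htree
  have hsum : ∑ e : E, degE τ e = τ.edgeSet.ncard := sum_degE hle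
  have h2 : ∑ e : E, degE τ e = ∑ e : E, (f e + 1) := by
    refine Finset.sum_congr rfl (fun e _ => ?_); exact hdeg e
  rw [Finset.sum_add_distrib, Finset.sum_const, Finset.card_univ, smul_eq_mul, mul_one] at h2
  have hVE : Fintype.card (V ⊕ E) = Fintype.card V + Fintype.card E := Fintype.card_sum
  have hV : 1 ≤ Fintype.card V := Fintype.card_pos
  have hE : 1 ≤ Fintype.card E := Fintype.card_pos
  constructor
  · omega
  · exact hV

end Bip
end HyperProof

namespace HyperProof
section Exchange
set_option linter.unusedSectionVars false
set_option maxHeartbeats 1000000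

variable {V E : Type*} [Fintype V] [Fintype E] {r : V → E → Prop}

lemma tree_exchange_aux {σ : SimpleGraph (V ⊕ E)} (hσ : IsSpanningTree (BipGraph r) σ) :
    ∀ (n : ℕ) (τ : SimpleGraph (V ⊕ E)), (τ.edgeSet \ σ.edgeSet).ncard ≤ n →
    IsSpanningTree (BipGraph r) τ → ∀ i : E, degE σ i < degE τ i →
    ∃ l, l ≠ i ∧ degE τ l < degE σ l ∧ ∃ ρ, IsSpanningTree (BipGraph r) ρ ∧
      degE ρ i + 1 = degE τ i ∧ degE ρ l = degE τ l + 1 ∧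
      ∀ x, x ≠ i → x ≠ l → degE ρ x = degE τ x := by
  obtain ⟨hσle, hσconn, hσacy⟩ := hσ
  intro n
  induction n with
  | zero =>
    intro τ hm hτ i hi
    exfalso
    obtain ⟨hτle, hτconn, hτacy⟩ := hτ
    have hemp : τ.edgeSet \ σ.edgeSet = ∅ := by
      have := Set.ncard_eq_zero (s := τ.edgeSet \ σ.edgeSet) (Set.toFinite _)
      rw [← this]; omega
    have hsub : τ.edgeSet ⊆ σ.edgeSet := by
      rw [Set.diff_eq_empty] at hemp; exact hemp
    have h1 := ncard_edgeSet_of_isTree (⟨hτconn, hτacy⟩ : τ.IsTree)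
    have h2 := ncard_edgeSet_of_isTree (⟨hσconn, hσacy⟩ : σ.IsTree)
    have : τ.edgeSet = σ.edgeSet := Set.eq_of_subset_of_ncard_le hsub (by omega) (Set.toFinite _)
    rw [edgeSet_inj.mp this] at hi
    omega
  | succ n ih =>
    intro τ hm hτ i hi
    obtain ⟨hτle, hτconn, hτacy⟩ := hτ
    -- step 1 : an edge (inr i, inl v₀) of τ not in σ
    have h1 : ¬ (τ.neighborSet (Sum.inr i) ⊆ σ.neighborSet (Sum.inr i)) := by
      intro hsub
      have := Set.ncard_le_ncard hsub (Set.toFinite _)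
      rw [degE, degE] at hi; omega
    obtain ⟨x, hxτ, hxσ⟩ := Set.not_subset.mp h1
    rw [mem_neighborSet] at hxτ
    obtain ⟨v₀, e₀, hr₀, hsh⟩ := bip_shape hτle hxτ
    rcases hsh with ⟨h1', h2'⟩ | ⟨h1', h2'⟩
    · exact absurd h1' (by simp)
    obtain rfl : x = Sum.inl v₀ := h2'
    obtain rfl : i = e₀ := by simpa using h1'

    have hadjτ : τ.Adj (Sum.inr i) (Sum.inl v₀) := hxτ
    have hadjσn : ¬ σ.Adj (Sum.inr i) (Sum.inl v₀) := hxσ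
    set rm : Sym2 (V ⊕ E) := s(Sum.inr i, Sum.inl v₀) with hrm
    set K : SimpleGraph (V ⊕ E) := τ.deleteEdges {rm} with hKdef
    set P : V ⊕ E → Prop := fun w => K.Reachable (Sum.inl v₀) w with hPdef
    have hswap : ({s(Sum.inl v₀, Sum.inr i)} : Set (Sym2 (V ⊕ E))) = {rm} := by
      rw [hrm, Sym2.eq_swap]
    have hPi : ¬ P (Sum.inr i) := by
      have hbr := (isAcyclic_iff_forall_adj_isBridge.mp hτacy) hadjτ.symm
      rw [isBridge_iff] at hbr
      intro hP
      apply hbr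
      have : τ \ fromEdgeSet {s(Sum.inl v₀, Sum.inr i)} = K := by
        rw [hKdef, deleteEdges, hswap]
      rw [hswap]
      exact hP
    have hT1 : ∀ w, P w ∨ K.Reachable (Sum.inr i) w := by
      intro w
      have := reach_del_of_preconnected hτconn.preconnected (Sum.inl v₀) (Sum.inr i) w
      rw [show τ.deleteEdges {s(Sum.inl v₀, Sum.inr i)} = K by rw [hKdef, hswap]] at this
      exact this
    -- step 4 : crossing edge of σ
    obtain ⟨a, b, hab, hPa, hPb⟩ :=
      exists_cross_edge (hσconn.preconnected (Sum.inl v₀) (Sum.inr i)) P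
        (Reachable.refl _) hPi
    have hab_ne : a ≠ b := fun h => hPb (h ▸ hPa)
    have hKprop : ∀ z1 z2, K.Adj z1 z2 → P z1 → P z2 := fun z1 z2 hz h => h.trans hz.reachable
    have hab_ne_rm : s(a, b) ≠ rm := by
      intro h
      apply hadjσn
      have : s(a,b) ∈ σ.edgeSet := hab
      rw [h] at this
      exact this
    have hnKab : ¬ K.Adj a b := fun h => hPb (hKprop _ _ h hPa)
    have hnτab : ¬ τ.Adj a b := by
      intro h
      exact hnKab (by rw [hKdef]; exact deleteEdges_adj.mpr ⟨h, by simpa using hab_ne_rm⟩)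
    -- shape of the crossing edge
    obtain ⟨w₁, e', hre', hshab⟩ := bip_shape hσle hab
    -- the new graph
    set ρ₀ : SimpleGraph (V ⊕ E) := K ⊔ SimpleGraph.edge a b with hρ₀def
    have hρ₀adj : ∀ z1 z2, ρ₀.Adj z1 z2 ↔
        ((τ.Adj z1 z2 ∧ s(z1, z2) ≠ rm) ∨ (z1 = a ∧ z2 = b) ∨ (z1 = b ∧ z2 = a)) := by
      intro z1 z2
      rw [hρ₀def]
      simp only [sup_adj, hKdef, deleteEdges_adj, Set.mem_singleton_iff, edge_adj]
      constructor
      · rintro (⟨h1', h2'⟩ | ⟨(⟨rfl, rfl⟩ | ⟨rfl, rfl⟩), hne⟩)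
        · exact Or.inl ⟨h1', h2'⟩
        · exact Or.inr (Or.inl ⟨rfl, rfl⟩)
        · exact Or.inr (Or.inr ⟨rfl, rfl⟩)
      · rintro (⟨h1', h2'⟩ | ⟨rfl, rfl⟩ | ⟨rfl, rfl⟩)
        · exact Or.inl ⟨h1', h2'⟩
        · exact Or.inr ⟨Or.inl ⟨rfl, rfl⟩, hab_ne⟩
        · exact Or.inr ⟨Or.inr ⟨rfl, rfl⟩, hab_ne.symm⟩
    have hρ₀le : ρ₀ ≤ BipGraph r := by
      intro z1 z2 hz
      rw [hρ₀adj] at hz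
      rcases hz with ⟨h1', _⟩ | ⟨rfl, rfl⟩ | ⟨rfl, rfl⟩
      · exact hτle h1'
      · exact hσle hab
      · exact hσle hab.symm
    have hKρ₀ : K ≤ ρ₀ := le_sup_left
    have hKb : K.Reachable (Sum.inr i) b := (hT1 b).resolve_left hPb
    have hhub : ∀ w, ρ₀.Reachable w (Sum.inl v₀) := by
      intro w
      rcases hT1 w with hw | hw
      · exact (Reachable.mono hKρ₀ hw).symm
      · have h1' : ρ₀.Reachable w (Sum.inr i) := (Reachable.mono hKρ₀ hw).symm
        have h2' : ρ₀.Reachable (Sum.inr i) b := Reachable.mono hKρ₀ hKb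
        have h3' : ρ₀.Adj b a := by rw [hρ₀adj]; exact Or.inr (Or.inr ⟨rfl, rfl⟩)
        have h4' : ρ₀.Reachable a (Sum.inl v₀) := (Reachable.mono hKρ₀ hPa).symm
        exact h1'.trans (h2'.trans (h3'.reachable.trans h4'))
    have hρ₀conn : ρ₀.Connected := by
      haveI : Nonempty (V ⊕ E) := hτconn.nonempty
      exact Connected.mk (fun u v => (hhub u).trans (hhub v).symm)
    have hrm_mem : rm ∈ τ.edgeSet := hadjτ
    have hab_mem_σ : s(a, b) ∈ σ.edgeSet := hab
    have hab_nmem_τ : s(a, b) ∉ τ.edgeSet := hnτab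
    have hρ₀edges : ρ₀.edgeSet = (τ.edgeSet \ {rm}) ∪ {s(a, b)} := by
      rw [hρ₀def, edgeSet_sup, hKdef, edgeSet_deleteEdges, edge_edgeSet_of_ne hab_ne]
    have hρ₀card : ρ₀.edgeSet.ncard = τ.edgeSet.ncard := by
      rw [hρ₀edges]
      have hd : s(a, b) ∉ τ.edgeSet \ {rm} := fun h => hab_nmem_τ h.1
      rw [Set.union_singleton, Set.ncard_insert_of_notMem hd (Set.toFinite _),
        Set.ncard_diff_singleton_add_one hrm_mem (Set.toFinite _)]
    have hρ₀tree : ρ₀.IsTree := by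
      apply isTree_of_connected_of_card hρ₀conn
      have := ncard_edgeSet_of_isTree (⟨hτconn, hτacy⟩ : τ.IsTree)
      omega
    have hρ₀span : IsSpanningTree (BipGraph r) ρ₀ :=
      ⟨hρ₀le, hρ₀tree.isConnected, hρ₀tree.IsAcyclic⟩
    -- measure decrease
    have hmeas : (ρ₀.edgeSet \ σ.edgeSet).ncard ≤ n := by
      have hsub : ρ₀.edgeSet \ σ.edgeSet ⊆ (τ.edgeSet \ σ.edgeSet) \ {rm} := by
        rintro q ⟨hq1, hq2⟩
        rw [hρ₀edges] at hq1
        rcases hq1 with ⟨hq3, hq4⟩ | hq5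
        · exact ⟨⟨hq3, hq2⟩, hq4⟩
        · exact absurd (hq5 ▸ hab_mem_σ) hq2
      have h5 : rm ∈ τ.edgeSet \ σ.edgeSet := ⟨hrm_mem, fun h => hadjσn h⟩
      have h6 := Set.ncard_diff_singleton_add_one h5 (Set.toFinite _)
      have h7 := Set.ncard_le_ncard hsub (Set.toFinite _)
      omega
    -- neighbour sets of E-vertices in ρ₀
    have hv₀mem : Sum.inl v₀ ∈ τ.neighborSet (Sum.inr i) := hadjτ
    have hsab : (a = Sum.inl w₁ ∧ b = Sum.inr e') ∨ (a = Sum.inr e' ∧ b = Sum.inl w₁) := by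
      rcases hshab with ⟨h1', h2'⟩ | ⟨h1', h2'⟩
      · exact Or.inl ⟨h1', h2'⟩
      · exact Or.inr ⟨h1', h2'⟩
    have hinre' : Sum.inr e' = a ∨ Sum.inr e' = b := by
      rcases hsab with ⟨h1', h2'⟩ | ⟨h1', h2'⟩
      · exact Or.inr h2'.symm
      · exact Or.inl h1'.symm
    have hinlw₁ : (Sum.inl w₁ : V ⊕ E) = a ∨ (Sum.inl w₁ : V ⊕ E) = b := by
      rcases hsab with ⟨h1', h2'⟩ | ⟨h1', h2'⟩
      · exact Or.inl h1'.symm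
      · exact Or.inr h2'.symm
    -- τ has no edge between inr e' and inl w₁
    have hτe'w₁ : ¬ τ.Adj (Sum.inr e') (Sum.inl w₁) := by
      intro h
      have : s(Sum.inr e', Sum.inl w₁) = s(a, b) ∨ s(Sum.inr e', Sum.inl w₁) = s(b, a) := by
        rcases hsab with ⟨rfl, rfl⟩ | ⟨rfl, rfl⟩
        · exact Or.inr rfl
        · exact Or.inl rfl
      rcases this with h' | h'
      · exact hnτab (by rwa [← mem_edgeSet, h', mem_edgeSet] at h)
      · exact hnτab (by rw [← mem_edgeSet, h', Sym2.eq_swap, mem_edgeSet] at h; exact h)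
    -- degE values of ρ₀
    have hdeg_other : ∀ x : E, x ≠ i → x ≠ e' → degE ρ₀ x = degE τ x := by
      intro x hxi hxe'
      rw [degE, degE]
      congr 1
      ext z
      simp only [mem_neighborSet]
      rw [hρ₀adj]
      constructor
      · rintro (⟨h1', _⟩ | ⟨h1', h2'⟩ | ⟨h1', h2'⟩)
        · exact h1'
        · exfalso
          rcases hsab with ⟨ha', hb'⟩ | ⟨ha', hb'⟩
          · rw [ha'] at h1'; simp at h1'
          · rw [ha'] at h1'; exact hxe' (by simpa using h1')
        · exfalso
          rcases hsab with ⟨ha', hb'⟩ | ⟨ha', hb'⟩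
          · rw [hb'] at h1'; exact hxe' (by simpa using h1')
          · rw [hb'] at h1'; simp at h1'
      · intro h
        left
        refine ⟨h, ?_⟩
        intro hcon
        rw [hrm, Sym2.eq_iff] at hcon
        rcases hcon with (⟨h1', h2'⟩ | ⟨h1', h2'⟩)
        · exact hxi (by simpa using h1')
        · simp at h1'
    have hdeg_i_ne : e' ≠ i → degE ρ₀ i + 1 = degE τ i := by
      intro he'i
      have : ρ₀.neighborSet (Sum.inr i) = τ.neighborSet (Sum.inr i) \ {Sum.inl v₀} := by
        ext z
        simp only [mem_neighborSet, Set.mem_diff, Set.mem_singleton_iff]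
        rw [hρ₀adj]
        constructor
        · rintro (⟨h1', h2'⟩ | ⟨h1', h2'⟩ | ⟨h1', h2'⟩)
          · refine ⟨h1', ?_⟩
            intro hz
            apply h2'
            rw [hz, hrm]
          · exfalso
            rcases hsab with ⟨ha', hb'⟩ | ⟨ha', hb'⟩
            · rw [ha'] at h1'; simp at h1'
            · rw [ha'] at h1'; exact he'i (by simpa using h1'.symm)
          · exfalso
            rcases hsab with ⟨ha', hb'⟩ | ⟨ha', hb'⟩
            · rw [hb'] at h1'; exact he'i (by simpa using h1'.symm)
            · rw [hb'] at h1'; simp at h1'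
        · rintro ⟨h1', h2'⟩
          left
          refine ⟨h1', ?_⟩
          intro hcon
          rw [hrm, Sym2.eq_iff] at hcon
          rcases hcon with (⟨h3', h4'⟩ | ⟨h3', h4'⟩)
          · exact h2' h4'
          · simp at h3'
      rw [degE, degE, this]
      exact Set.ncard_diff_singleton_add_one hv₀mem (Set.toFinite _)
    have hw₁nτe' : Sum.inl w₁ ∉ τ.neighborSet (Sum.inr e') := fun h => hτe'w₁ h
    have hdeg_e' : e' ≠ i → degE ρ₀ e' = degE τ e' + 1 := by
      intro he'i
      have : ρ₀.neighborSet (Sum.inr e') = insert (Sum.inl w₁) (τ.neighborSet (Sum.inr e')) := by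
        ext z
        simp only [mem_neighborSet, Set.mem_insert_iff]
        rw [hρ₀adj]
        constructor
        · rintro (⟨h1', h2'⟩ | ⟨h1', h2'⟩ | ⟨h1', h2'⟩)
          · exact Or.inr h1'
          · left
            rcases hsab with ⟨ha', hb'⟩ | ⟨ha', hb'⟩
            · rw [ha'] at h1'; simp at h1'
            · rw [h2', hb']
          · left
            rcases hsab with ⟨ha', hb'⟩ | ⟨ha', hb'⟩
            · rw [h2', ha']
            · rw [hb'] at h1'; simp at h1'
        · rintro (rfl | h)
          · rcases hsab with ⟨ha', hb'⟩ | ⟨ha', hb'⟩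
            · exact Or.inr (Or.inr ⟨hb'.symm, ha'.symm⟩)
            · exact Or.inr (Or.inl ⟨ha'.symm, hb'.symm⟩)
          · left
            refine ⟨h, ?_⟩
            intro hcon
            rw [hrm, Sym2.eq_iff] at hcon
            rcases hcon with (⟨h3', h4'⟩ | ⟨h3', h4'⟩)
            · exact he'i (by simpa using h3')
            · simp at h3'
      rw [degE, degE, this, Set.ncard_insert_of_notMem hw₁nτe' (Set.toFinite _)]
    have hdeg_i_eq : e' = i → degE ρ₀ i = degE τ i := by
      rintro rfl
      have hw₁v₀ : (Sum.inl w₁ : V ⊕ E) ≠ Sum.inl v₀ := by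
        intro h
        apply hab_ne_rm
        rcases hsab with ⟨rfl, rfl⟩ | ⟨rfl, rfl⟩
        · rw [hrm, h, Sym2.eq_swap]
        · rw [hrm, h]
      have : ρ₀.neighborSet (Sum.inr e') =
          insert (Sum.inl w₁) (τ.neighborSet (Sum.inr e') \ {Sum.inl v₀}) := by
        ext z
        simp only [mem_neighborSet, Set.mem_insert_iff, Set.mem_diff, Set.mem_singleton_iff]
        rw [hρ₀adj]
        constructor
        · rintro (⟨h1', h2'⟩ | ⟨h1', h2'⟩ | ⟨h1', h2'⟩)
          · right
            refine ⟨h1', ?_⟩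
            intro hz
            exact h2' (by rw [hz, hrm])
          · left
            rcases hsab with ⟨ha', hb'⟩ | ⟨ha', hb'⟩
            · rw [ha'] at h1'; simp at h1'
            · rw [h2', hb']
          · left
            rcases hsab with ⟨ha', hb'⟩ | ⟨ha', hb'⟩
            · rw [h2', ha']
            · rw [hb'] at h1'; simp at h1'
        · rintro (rfl | ⟨h1', h2'⟩)
          · rcases hsab with ⟨ha', hb'⟩ | ⟨ha', hb'⟩
            · exact Or.inr (Or.inr ⟨hb'.symm, ha'.symm⟩)
            · exact Or.inr (Or.inl ⟨ha'.symm, hb'.symm⟩)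
          · left
            refine ⟨h1', ?_⟩
            intro hcon
            rw [hrm, Sym2.eq_iff] at hcon
            rcases hcon with (⟨h3', h4'⟩ | ⟨h3', h4'⟩)
            · exact h2' h4'
            · simp at h3'
      have hw₁nmem : Sum.inl w₁ ∉ τ.neighborSet (Sum.inr e') \ {Sum.inl v₀} := by
        intro h
        exact hτe'w₁ h.1
      rw [degE, degE, this, Set.ncard_insert_of_notMem hw₁nmem (Set.toFinite _),
        Set.ncard_diff_singleton_add_one hv₀mem (Set.toFinite _)]
    -- case split
    by_cases hce : e' = i
    · -- recurse with same i
      have hdi : degE σ i < degE ρ₀ i := by rw [hdeg_i_eq hce]; exact hi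
      obtain ⟨l, hl1, hl2, ρ, hρ, hρi, hρl, hρo⟩ := ih ρ₀ hmeas hρ₀span i hdi
      refine ⟨l, hl1, ?_, ρ, hρ, ?_, ?_, ?_⟩
      · rwa [hdeg_other l (by exact hl1) (fun h => hl1 (h.trans hce)) ] at hl2
      · rw [hρi, hdeg_i_eq hce]
      · rw [hρl, hdeg_other l hl1 (fun h => hl1 (h.trans hce))]
      · intro x hx1 hx2
        rw [hρo x hx1 hx2]
        by_cases hxe' : x = e'
        · exact absurd (hxe'.trans hce) hx1
        · exact hdeg_other x hx1 hxe'
    · by_cases hlt : degE τ e' < degE σ e'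
      · -- direct answer
        refine ⟨e', hce, hlt, ρ₀, hρ₀span, hdeg_i_ne hce, hdeg_e' hce, ?_⟩
        intro x hx1 hx2
        exact hdeg_other x hx1 hx2
      · -- recurse with e'
        push_neg at hlt
        have hde' : degE σ e' < degE ρ₀ e' := by
          rw [hdeg_e' hce]; omega
        obtain ⟨l, hl1, hl2, ρ, hρ, hρi, hρl, hρo⟩ := ih ρ₀ hmeas hρ₀span e' hde'
        have hlni : l ≠ i := by
          intro h
          rw [h] at hl2
          have := hdeg_i_ne hce
          omega
        refine ⟨l, hlni, ?_, ρ, hρ, ?_, ?_, ?_⟩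
        · rwa [hdeg_other l hlni hl1] at hl2
        · have h8 := hρo i (fun h => hce h.symm) (fun h => hlni h.symm)
          rw [h8]
          have := hdeg_i_ne hce
          omega
        · rw [hρl, hdeg_other l hlni hl1]
        · intro x hx1 hx2
          by_cases hxe' : x = e'
          · subst hxe'
            have h9 := hρi
            have h10 := hdeg_e' hce
            omega
          · rw [hρo x hxe' hx2, hdeg_other x hx1 hxe']

lemma tree_exchange {τ σ : SimpleGraph (V ⊕ E)}
    (hτ : IsSpanningTree (BipGraph r) τ) (hσ : IsSpanningTree (BipGraph r) σ)
    {i : E} (hi : degE σ i < degE τ i) :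
    ∃ l, l ≠ i ∧ degE τ l < degE σ l ∧ ∃ ρ, IsSpanningTree (BipGraph r) ρ ∧
      degE ρ i + 1 = degE τ i ∧ degE ρ l = degE τ l + 1 ∧
      ∀ x, x ≠ i → x ≠ l → degE ρ x = degE τ x :=
  tree_exchange_aux hσ (τ.edgeSet \ σ.edgeSet).ncard τ (le_refl _) hτ i hi

end Exchange
end HyperProof

namespace HyperProof
section Zero
set_option linter.unusedSectionVars false
set_option maxHeartbeats 1000000

variable {V E : Type*} [Fintype V] [Fintype E] {r : V → E → Prop}

lemma degE_pos [Nonempty V] [Nonempty E] {τ : SimpleGraph (V ⊕ E)} (hconn : τ.Connected)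
    (x : E) : 0 < degE τ x := by
  have hcard : 1 < Fintype.card (V ⊕ E) := by
    rw [Fintype.card_sum]
    have h1 : 1 ≤ Fintype.card V := Fintype.card_pos
    have h2 : 1 ≤ Fintype.card E := Fintype.card_pos
    omega
  exact neighbor_nonempty hconn hcard (Sum.inr x)

/-- A spanning tree yields a hypertree. -/
lemma hypertree_of_tree [Nonempty V] [Nonempty E] {τ : SimpleGraph (V ⊕ E)}
    (hτ : IsSpanningTree (BipGraph r) τ) :
    IsHypertree r (fun e => degE τ e - 1) := by
  refine ⟨τ, hτ, fun e => ?_⟩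
  have := degE_pos (V := V) hτ.2.1 e
  simp only [degE] at this ⊢
  omega

lemma exists_hypertree [Nonempty V] [Nonempty E] (hconn : (BipGraph r).Connected) :
    ∃ f : E → ℕ, IsHypertree r f := by
  obtain ⟨τ, hle, htree⟩ :=
    exists_spanning_tree (BipGraph r).edgeSet.ncard (BipGraph r) (le_refl _) hconn
  exact ⟨_, hypertree_of_tree ⟨hle, htree.isConnected, htree.IsAcyclic⟩⟩

lemma zero_hypertree [Nonempty V] [Nonempty E] (hconn : (BipGraph r).Connected)
    (hdel : ∀ e : E, ((BipGraph r).induce {x | x ≠ Sum.inr e}).Connected) (e : E) :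
    ∃ f : E → ℕ, IsHypertree r f ∧ f e = 0 := by
  classical
  have hcard2 : 1 < Fintype.card (V ⊕ E) := by
    rw [Fintype.card_sum]
    have h1 : 1 ≤ Fintype.card V := Fintype.card_pos
    have h2 : 1 ≤ Fintype.card E := Fintype.card_pos
    omega
  -- a neighbour of (inr e) in the big graph
  have hnb : 0 < ((BipGraph r).neighborSet (Sum.inr e)).ncard :=
    neighbor_nonempty hconn hcard2 (Sum.inr e)
  rw [Set.ncard_pos (Set.toFinite _)] at hnb
  obtain ⟨x, hx⟩ := hnb
  rw [mem_neighborSet] at hx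
  obtain ⟨v₁, e₁, hr₁, hsh⟩ := bip_shape (le_refl (BipGraph r)) hx
  rcases hsh with ⟨h1', h2'⟩ | ⟨h1', h2'⟩
  · exact absurd h1' (by simp)
  obtain rfl : x = Sum.inl v₁ := h2'
  obtain rfl : e = e₁ := by simpa using h1'
  -- spanning tree of the deleted graph
  set S : Set (V ⊕ E) := {x | x ≠ Sum.inr e} with hS
  obtain ⟨t₀, ht₀le, ht₀tree⟩ :=
    exists_spanning_tree (((BipGraph r).induce S).edgeSet.ncard) _ (le_refl _) (hdel e)
  have hcardS : Fintype.card S = Fintype.card (V ⊕ E) - 1 := by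
    have h1 : Fintype.card {x : V ⊕ E // x = Sum.inr e} = 1 := Fintype.card_subtype_eq _
    have h2 := Fintype.card_subtype_compl (p := fun x : V ⊕ E => x = Sum.inr e)
    rw [h1] at h2
    rw [← h2]
    exact Fintype.card_congr (Equiv.subtypeEquivRight (fun x => Iff.rfl))
  -- the transported tree
  set img : Set (Sym2 (V ⊕ E)) := Sym2.map (fun a : S => (a : V ⊕ E)) '' t₀.edgeSet with himg
  set τ₀ : SimpleGraph (V ⊕ E) := SimpleGraph.fromEdgeSet img with hτ₀
  have hval_ne : ∀ a : S, (a : V ⊕ E) ≠ Sum.inr e := fun a => a.2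
  have hτ₀adj : ∀ x y, τ₀.Adj x y ↔
      (∃ a b : S, t₀.Adj a b ∧ (a : V ⊕ E) = x ∧ (b : V ⊕ E) = y) := by
    intro x y
    rw [hτ₀, fromEdgeSet_adj]
    constructor
    · rintro ⟨hmem, hne⟩
      obtain ⟨q, hq, hq2⟩ := hmem
      induction q using Sym2.ind with
      | _ a b =>
        rw [Sym2.map_pair_eq, Sym2.eq_iff] at hq2
        rw [mem_edgeSet] at hq
        rcases hq2 with ⟨ha, hb⟩ | ⟨ha, hb⟩
        · exact ⟨a, b, hq, ha, hb⟩
        · exact ⟨b, a, hq.symm, hb, ha⟩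
    · rintro ⟨a, b, hab, rfl, rfl⟩
      refine ⟨⟨s(a, b), hab, Sym2.map_pair_eq _ _ _⟩, ?_⟩
      exact fun h => hab.ne (Subtype.coe_injective h)
    -- the new tree
  set τ : SimpleGraph (V ⊕ E) := τ₀ ⊔ SimpleGraph.edge (Sum.inl v₁) (Sum.inr e) with hτdef
  have hv₁e : (Sum.inl v₁ : V ⊕ E) ≠ Sum.inr e := by simp
  have hτ₀leΓ : τ₀ ≤ BipGraph r := by
    intro x y hxy
    rw [hτ₀adj] at hxy
    obtain ⟨a, b, hab, rfl, rfl⟩ := hxy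
    exact ht₀le hab
  have hτle : τ ≤ BipGraph r := by
    rw [hτdef]
    refine sup_le hτ₀leΓ ?_
    intro x y hxy
    rw [edge_adj] at hxy
    rcases hxy.1 with ⟨rfl, rfl⟩ | ⟨rfl, rfl⟩
    · exact Or.inl ⟨v₁, e, rfl, rfl, hr₁⟩
    · exact Or.inr ⟨v₁, e, rfl, rfl, hr₁⟩
  have hhub : ∀ w, τ.Reachable w (Sum.inl v₁) := by
    intro w
    by_cases hw : w = Sum.inr e
    · subst hw
      have : τ.Adj (Sum.inr e) (Sum.inl v₁) := by
        rw [hτdef]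
        refine Or.inr ?_
        rw [edge_adj]
        exact ⟨Or.inr ⟨rfl, rfl⟩, hv₁e.symm⟩
      exact this.reachable
    · have hwS : w ∈ S := hw
      have hreach : t₀.Reachable ⟨w, hwS⟩ ⟨Sum.inl v₁, hv₁e⟩ :=
        ht₀tree.isConnected.preconnected _ _
      have h5 : τ₀.Reachable w (Sum.inl v₁) :=
        hreach.map ⟨Subtype.val, fun {a b} hab => (hτ₀adj _ _).mpr ⟨a, b, hab, rfl, rfl⟩⟩
      exact Reachable.mono (le_sup_left.trans_eq hτdef.symm) h5
  have hτconn : τ.Connected := by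
    haveI : Nonempty (V ⊕ E) := inferInstance
    exact Connected.mk (fun u v => (hhub u).trans (hhub v).symm)
  -- edge counting
  have himg_nodiag : ∀ q ∈ img, ¬ q.IsDiag := by
    rintro q ⟨p, hp, rfl⟩
    induction p using Sym2.ind with
    | _ a b =>
      rw [Sym2.map_pair_eq, Sym2.mk_isDiag_iff]
      rw [mem_edgeSet] at hp
      exact fun h => hp.ne (Subtype.coe_injective h)
  have hτ₀edges : τ₀.edgeSet = img := by
    rw [hτ₀, edgeSet_fromEdgeSet]
    ext q
    constructor
    · rintro ⟨hq1, _⟩; exact hq1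
    · intro hq; exact ⟨hq, himg_nodiag q hq⟩
  have hnew_nmem : s(Sum.inl v₁, Sum.inr e) ∉ img := by
    rintro ⟨p, hp, hp2⟩
    induction p using Sym2.ind with
    | _ a b =>
      rw [Sym2.map_pair_eq, Sym2.eq_iff] at hp2
      rcases hp2 with ⟨ha, hb⟩ | ⟨ha, hb⟩
      · exact hval_ne b hb
      · exact hval_ne a ha
  have himg_card : img.ncard = t₀.edgeSet.ncard := by
    rw [himg]
    exact Set.ncard_image_of_injective _ (Sym2.map.injective Subtype.coe_injective)
  have hτedges : τ.edgeSet = img ∪ {s(Sum.inl v₁, Sum.inr e)} := by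
    rw [hτdef, edgeSet_sup, hτ₀edges, edge_edgeSet_of_ne hv₁e]
  have ht₀card := ncard_edgeSet_of_isTree ht₀tree
  have hτcard : τ.edgeSet.ncard + 1 = Fintype.card (V ⊕ E) := by
    rw [hτedges, Set.union_singleton, Set.ncard_insert_of_notMem hnew_nmem (Set.toFinite _),
      himg_card]
    rw [hcardS] at ht₀card
    omega
  have hτtree : τ.IsTree := isTree_of_connected_of_card hτconn (by omega)
  have hτspan : IsSpanningTree (BipGraph r) τ := ⟨hτle, hτtree.isConnected, hτtree.IsAcyclic⟩
  -- the degree at e is 1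
  have hdeg1 : degE τ e = 1 := by
    have : τ.neighborSet (Sum.inr e) = {Sum.inl v₁} := by
      ext z
      simp only [mem_neighborSet, Set.mem_singleton_iff]
      constructor
      · intro h
        rw [hτdef] at h
        rcases h with h | h
        · rw [hτ₀adj] at h
          obtain ⟨a, b, hab, ha, hb⟩ := h
          exact absurd ha (hval_ne a)
        · rw [edge_adj] at h
          rcases h.1 with ⟨h1', h2'⟩ | ⟨h1', h2'⟩
          · exact absurd h1' (by simp)
          · exact h2'
      · rintro rfl
        rw [hτdef]
        refine Or.inr ?_
        rw [edge_adj]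
        exact ⟨Or.inr ⟨rfl, rfl⟩, hv₁e.symm⟩
    rw [degE, this, Set.ncard_singleton]
  refine ⟨fun e'' => degE τ e'' - 1, hypertree_of_tree hτspan, by show degE τ e - 1 = 0; rw [hdeg1]⟩

end Zero
end HyperProof

namespace HyperProof
section Abstract
set_option linter.unusedSectionVars false
set_option maxHeartbeats 1000000

variable {E : Type*} [Fintype E] [LinearOrder E]

/-- top-lex strict order on functions -/
def TL (f g : E → ℕ) : Prop := ∃ j, f j < g j ∧ ∀ s, j < s → f s = g s

lemma TL.asymm {f g : E → ℕ} (h1 : TL f g) (h2 : TL g f) : False := by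
  obtain ⟨j, hj1, hj2⟩ := h1
  obtain ⟨t, ht1, ht2⟩ := h2
  rcases lt_trichotomy j t with h | rfl | h
  · have := hj2 t h; omega
  · omega
  · have := ht2 j h; omega

lemma TL.trans {f g h : E → ℕ} (h1 : TL f g) (h2 : TL g h) : TL f h := by
  obtain ⟨j, hj1, hj2⟩ := h1
  obtain ⟨t, ht1, ht2⟩ := h2
  rcases lt_trichotomy j t with hlt | rfl | hlt
  · exact ⟨t, by rw [hj2 t hlt]; exact ht1, fun s hs => (hj2 s (hlt.trans hs)).trans (ht2 s hs)⟩
  · exact ⟨j, hj1.trans ht1, fun s hs => (hj2 s hs).trans (ht2 s hs)⟩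
  · exact ⟨j, by have := ht2 j hlt; omega,
      fun s hs => (hj2 s hs).trans (ht2 s (hlt.trans hs))⟩

lemma TL.trichotomy {f g : E → ℕ} (h : f ≠ g) : TL f g ∨ TL g f := by
  classical
  have hne : (Finset.univ.filter (fun j => f j ≠ g j)).Nonempty := by
    rw [Finset.filter_nonempty_iff]
    by_contra hc
    push_neg at hc
    exact h (funext fun j => hc j (Finset.mem_univ j))
  set j := (Finset.univ.filter (fun j => f j ≠ g j)).max' hne with hj
  have hjmem := (Finset.univ.filter (fun j => f j ≠ g j)).max'_mem hne
  rw [Finset.mem_filter] at hjmem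
  have habove : ∀ s, j < s → f s = g s := by
    intro s hs
    by_contra hc
    have : s ∈ Finset.univ.filter (fun j => f j ≠ g j) := by
      rw [Finset.mem_filter]; exact ⟨Finset.mem_univ s, hc⟩
    exact absurd (Finset.le_max' _ s this) (not_le.mpr hs)
  rcases lt_or_gt_of_ne hjmem.2 with hlt | hlt
  · exact Or.inl ⟨j, hlt, habove⟩
  · exact Or.inr ⟨j, hlt, fun s hs => (habove s hs).symm⟩

lemma exists_tl_max (s : Finset (E → ℕ)) (hs : s.Nonempty) :
    ∃ f ∈ s, ∀ g ∈ s, g ≠ f → TL g f := by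
  classical
  induction s using Finset.induction_on with
  | empty => exact absurd hs (by simp)
  | @insert a s ha ih =>
    rcases s.eq_empty_or_nonempty with rfl | hsne
    · refine ⟨a, by simp, ?_⟩
      intro g hg hga
      simp at hg
      exact absurd hg hga
    · obtain ⟨b, hb, hbmax⟩ := ih hsne
      by_cases hab : a = b
      · refine ⟨b, Finset.mem_insert_of_mem hb, ?_⟩
        intro g hg hgb
        rcases Finset.mem_insert.mp hg with rfl | hg'
        · exact absurd hab hgb
        · exact hbmax g hg' hgb
      · rcases TL.trichotomy hab with h | h
        · refine ⟨b, Finset.mem_insert_of_mem hb, ?_⟩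
          intro g hg hgb
          rcases Finset.mem_insert.mp hg with rfl | hg'
          · exact h
          · exact hbmax g hg' hgb
        · refine ⟨a, Finset.mem_insert_self a s, ?_⟩
          intro g hg hga
          rcases Finset.mem_insert.mp hg with rfl | hg'
          · exact absurd rfl hga
          · by_cases hgb : g = b
            · exact hgb ▸ h
            · exact (hbmax g hg' hgb).trans h

lemma transfer_fst (f : E → ℕ) (a b : E) : Transfer f a b a = f a - 1 := by
  simp [Transfer]

lemma transfer_snd (f : E → ℕ) {a b : E} (h : b ≠ a) : Transfer f a b b = f b + 1 := by
  simp [Transfer, h]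

lemma transfer_other (f : E → ℕ) {a b x : E} (h1 : x ≠ a) (h2 : x ≠ b) :
    Transfer f a b x = f x := by
  simp [Transfer, h1, h2]

lemma sum_split (h : E → ℕ) (e : E) :
    ∑ x, h x = h e + ∑ x ∈ Finset.univ.erase e, h x :=
  (Finset.add_sum_erase _ _ (Finset.mem_univ e)).symm

lemma sum_transfer {f : E → ℕ} {i j : E} (hij : i ≠ j) (hi : 0 < f i) :
    ∑ x, Transfer f i j x = ∑ x, f x := by
  classical
  have h1 := sum_split (Transfer f i j) i
  have h2 := sum_split f i
  have h3 := sum_split (fun x => Transfer f i j x) j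
  -- use double erase
  have hjmem : j ∈ Finset.univ.erase i := Finset.mem_erase.mpr ⟨Ne.symm hij, Finset.mem_univ j⟩
  have h4 : ∑ x ∈ Finset.univ.erase i, Transfer f i j x
      = Transfer f i j j + ∑ x ∈ (Finset.univ.erase i).erase j, Transfer f i j x :=
    (Finset.add_sum_erase _ _ hjmem).symm
  have h5 : ∑ x ∈ Finset.univ.erase i, f x
      = f j + ∑ x ∈ (Finset.univ.erase i).erase j, f x :=
    (Finset.add_sum_erase _ _ hjmem).symm
  have h6 : ∑ x ∈ (Finset.univ.erase i).erase j, Transfer f i j x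
      = ∑ x ∈ (Finset.univ.erase i).erase j, f x := by
    refine Finset.sum_congr rfl (fun x hx => ?_)
    rw [Finset.mem_erase, Finset.mem_erase] at hx
    exact transfer_other f hx.2.1 hx.1
  rw [transfer_fst] at h1
  rw [transfer_snd f (Ne.symm hij)] at h4
  omega

lemma sum_transfer_zero {f : E → ℕ} {i j : E} (hij : i ≠ j) (hi : f i = 0) :
    ∑ x, Transfer f i j x = (∑ x, f x) + 1 := by
  classical
  have h1 := sum_split (Transfer f i j) i
  have h2 := sum_split f i
  have hjmem : j ∈ Finset.univ.erase i := Finset.mem_erase.mpr ⟨Ne.symm hij, Finset.mem_univ j⟩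
  have h4 : ∑ x ∈ Finset.univ.erase i, Transfer f i j x
      = Transfer f i j j + ∑ x ∈ (Finset.univ.erase i).erase j, Transfer f i j x :=
    (Finset.add_sum_erase _ _ hjmem).symm
  have h5 : ∑ x ∈ Finset.univ.erase i, f x
      = f j + ∑ x ∈ (Finset.univ.erase i).erase j, f x :=
    (Finset.add_sum_erase _ _ hjmem).symm
  have h6 : ∑ x ∈ (Finset.univ.erase i).erase j, Transfer f i j x
      = ∑ x ∈ (Finset.univ.erase i).erase j, f x := by
    refine Finset.sum_congr rfl (fun x hx => ?_)
    rw [Finset.mem_erase, Finset.mem_erase] at hx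
    exact transfer_other f hx.2.1 hx.1
  rw [transfer_fst] at h1
  rw [transfer_snd f (Ne.symm hij)] at h4
  omega

/-- The exchange property. -/
def Exc (B : Set (E → ℕ)) : Prop :=
  ∀ f ∈ B, ∀ h ∈ B, ∀ i, h i < f i → ∃ l, f l < h l ∧ Transfer f i l ∈ B

/-- Claim A : external activity transfers are exactly "defects". -/
lemma claimA {B : Set (E → ℕ)} {m : ℕ} (hBfin : B.Finite)
    (hsum : ∀ f ∈ B, ∑ x, f x = m) (hexc : Exc B) {f : E → ℕ} (hf : f ∈ B) (e : E) :
    (∃ e', e' < e ∧ Transfer f e' e ∈ B) ↔ (∃ g ∈ B, f e < g e ∧ ∀ s, e < s → g s = f s) := by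
  classical
  constructor
  · rintro ⟨e', hlt, htr⟩
    have hne : e' ≠ e := ne_of_lt hlt
    have hfe' : 0 < f e' := by
      by_contra hc
      push_neg at hc
      have h0 : f e' = 0 := by omega
      have := sum_transfer_zero (f := f) hne h0
      rw [hsum f hf, hsum _ htr] at this
      omega
    refine ⟨Transfer f e' e, htr, ?_, ?_⟩
    · rw [transfer_snd f hne.symm]; omega
    · intro s hs
      have h1 : s ≠ e' := fun h => lt_asymm hlt (h ▸ hs)
      have h2 : s ≠ e := fun h => absurd (h ▸ hs) (lt_irrefl e)
      exact transfer_other f h1 h2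
  · rintro ⟨g0, hg0B, hg0e, hg0s⟩
    -- minimize distance over T
    set d : (E → ℕ) → ℕ := fun g => ∑ x, ((f x - g x) + (g x - f x)) with hd
    set T : Finset (E → ℕ) :=
      hBfin.toFinset.filter (fun g => f e < g e ∧ ∀ s, e < s → g s = f s) with hT
    have hTne : T.Nonempty := ⟨g0, by
      rw [hT, Finset.mem_filter, Set.Finite.mem_toFinset]
      exact ⟨hg0B, hg0e, hg0s⟩⟩
    obtain ⟨g, hgT, hgmin⟩ := T.exists_min_image d hTne
    rw [hT, Finset.mem_filter, Set.Finite.mem_toFinset] at hgT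
    obtain ⟨hgB, hge, hgs⟩ := hgT
    -- step 1 : g e = f e + 1
    have hstep1 : g e = f e + 1 := by
      by_contra hc
      have hge2 : f e + 2 ≤ g e := by omega
      obtain ⟨l, hl1, hl2⟩ := hexc g hgB f hf e hge
      have hle : l ≠ e := fun h => by rw [h] at hl1; omega
      have hllt : l < e := by
        rcases lt_or_gt_of_ne hle with h | h
        · exact h
        · exfalso; have := hgs l h; omega
      have hmem : Transfer g e l ∈ T := by
        rw [hT, Finset.mem_filter, Set.Finite.mem_toFinset]
        refine ⟨hl2, ?_, ?_⟩
        · rw [transfer_fst]; omega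
        · intro s hs
          rw [transfer_other g (fun h => absurd (by rw [h] at hs; exact hs) (lt_irrefl e))
            (fun h => lt_asymm hllt (by rw [h] at hs; exact hs))]
          exact hgs s hs
      have hlt' : d (Transfer g e l) < d g := by
        rw [hd]
        refine Finset.sum_lt_sum (fun x _ => ?_) ⟨e, Finset.mem_univ e, ?_⟩
        · by_cases hx1 : x = e
          · rw [hx1, transfer_fst]; omega
          · by_cases hx2 : x = l
            · rw [hx2, transfer_snd g hle]; omega
            · rw [transfer_other g hx1 hx2]
        · rw [transfer_fst]; omega
      exact absurd (hgmin _ hmem) (by omega)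
    -- step 2 : g x ≤ f x off e
    have hstep2 : ∀ x, x ≠ e → g x ≤ f x := by
      intro i hie
      by_contra hc
      push_neg at hc
      obtain ⟨l, hl1, hl2⟩ := hexc g hgB f hf i hc
      have hile : i < e := by
        rcases lt_or_gt_of_ne hie with h | h
        · exact h
        · exfalso; have := hgs i h; omega
      have hle : l ≠ i := fun h => by rw [h] at hl1; omega
      have hlee : l ≠ e := fun h => by rw [h] at hl1; omega
      have hllt : l < e := by
        rcases lt_or_gt_of_ne hlee with h | h
        · exact h
        · exfalso; have := hgs l h; omega
      have hmem : Transfer g i l ∈ T := by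
        rw [hT, Finset.mem_filter, Set.Finite.mem_toFinset]
        refine ⟨hl2, ?_, ?_⟩
        · rw [transfer_other g (Ne.symm hie) (Ne.symm hlee)]; omega
        · intro s hs
          rw [transfer_other g (fun h => lt_asymm hile (by rw [h] at hs; exact hs))
            (fun h => lt_asymm hllt (by rw [h] at hs; exact hs))]
          exact hgs s hs
      have hlt' : d (Transfer g i l) < d g := by
        rw [hd]
        refine Finset.sum_lt_sum (fun x _ => ?_) ⟨i, Finset.mem_univ i, ?_⟩
        · by_cases hx1 : x = i
          · rw [hx1, transfer_fst]; omega
          · by_cases hx2 : x = l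
            · rw [hx2, transfer_snd g hle]; omega
            · rw [transfer_other g hx1 hx2]
        · rw [transfer_fst]; omega
      exact absurd (hgmin _ hmem) (by omega)
    -- step 3 : there is a deficit coordinate
    have hsumf := hsum f hf
    have hsumg := hsum g hgB
    have hex : ∃ i, g i < f i := by
      by_contra hc
      push_neg at hc
      have : ∑ x, f x < ∑ x, g x := by
        refine Finset.sum_lt_sum (fun x _ => hc x) ⟨e, Finset.mem_univ e, by omega⟩
      omega
    obtain ⟨i, hi⟩ := hex
    have hie : i ≠ e := fun h => by rw [h] at hi; omega
    have hilt : i < e := by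
      rcases lt_or_gt_of_ne hie with h | h
      · exact h
      · exfalso; have := hgs i h; omega
    -- sums over erase e
    have h2 := sum_split f e
    have h3 := sum_split g e
    have himem : i ∈ Finset.univ.erase e := Finset.mem_erase.mpr ⟨hie, Finset.mem_univ i⟩
    have h4 : ∑ x ∈ Finset.univ.erase e, f x
        = f i + ∑ x ∈ (Finset.univ.erase e).erase i, f x := (Finset.add_sum_erase _ _ himem).symm
    have h5 : ∑ x ∈ Finset.univ.erase e, g x
        = g i + ∑ x ∈ (Finset.univ.erase e).erase i, g x := (Finset.add_sum_erase _ _ himem).symm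
    have h6 : ∑ x ∈ (Finset.univ.erase e).erase i, g x ≤ ∑ x ∈ (Finset.univ.erase e).erase i, f x := by
      refine Finset.sum_le_sum (fun x hx => ?_)
      rw [Finset.mem_erase, Finset.mem_erase] at hx
      exact hstep2 x hx.2.1
    have h7 : ∑ x ∈ (Finset.univ.erase e).erase i, g x = ∑ x ∈ (Finset.univ.erase e).erase i, f x := by
      omega
    have h8 : ∀ x ∈ (Finset.univ.erase e).erase i, g x = f x := by
      intro x hx
      by_contra hc
      rw [Finset.mem_erase, Finset.mem_erase] at hx
      have hlt'' : g x < f x := lt_of_le_of_ne (hstep2 x hx.2.1) hc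
      have : ∑ x ∈ (Finset.univ.erase e).erase i, g x < ∑ x ∈ (Finset.univ.erase e).erase i, f x := by
        refine Finset.sum_lt_sum (fun y hy => ?_) ⟨x, by rw [Finset.mem_erase, Finset.mem_erase]; exact hx, hlt''⟩
        rw [Finset.mem_erase, Finset.mem_erase] at hy
        exact hstep2 y hy.2.1
      omega
    have hgi : g i + 1 = f i := by omega
    refine ⟨i, hilt, ?_⟩
    have : Transfer f i e = g := by
      funext x
      by_cases hx1 : x = i
      · rw [hx1, transfer_fst]; omega
      · by_cases hx2 : x = e
        · rw [hx2, transfer_snd f (Ne.symm hie)]; omega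
        · rw [transfer_other f hx1 hx2]
          exact (h8 x (by rw [Finset.mem_erase, Finset.mem_erase]; exact ⟨hx1, hx2, Finset.mem_univ x⟩)).symm
    rw [this]
    exact hgB

end Abstract
end HyperProof

namespace HyperProof
section Count
set_option linter.unusedSectionVars false
set_option maxHeartbeats 1000000

variable {E : Type*} [Fintype E] [LinearOrder E]

theorem abstract_count {B : Set (E → ℕ)} {m : ℕ} (hBfin : B.Finite) (hBne : B.Nonempty)
    (hsum : ∀ f ∈ B, ∑ x, f x = m) (hexc : Exc B)
    (hzero : ∀ j, ∃ h ∈ B, h j = 0) :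
    Nat.card {f : E → ℕ // f ∈ B ∧
      {t | ∃ g ∈ B, f t < g t ∧ ∀ s, t < s → g s = f s}.ncard = 1} = m := by
  classical
  set D : (E → ℕ) → Set E := fun f => {t | ∃ g ∈ B, f t < g t ∧ ∀ s, t < s → g s = f s}
    with hDdef
  obtain ⟨fstar, hfstarT, hfmax'⟩ := exists_tl_max hBfin.toFinset
    (by rwa [Set.Finite.toFinset_nonempty])
  rw [Set.Finite.mem_toFinset] at hfstarT
  have hfmax : ∀ g ∈ B, g ≠ fstar → TL g fstar := by
    intro g hg
    exact hfmax' g (by rwa [Set.Finite.mem_toFinset])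
  have K1 : ∀ j, ∀ g ∈ B, (∀ s, j < s → g s = fstar s) → g j ≤ fstar j := by
    intro j g hg hsuf
    by_contra hc
    push_neg at hc
    have hne : g ≠ fstar := fun h => by rw [h] at hc; omega
    exact TL.asymm ⟨j, hc, fun s hs => (hsuf s hs).symm⟩ (hfmax g hg hne)
  have hz : ∀ j, ∃ g ∈ B, (∀ s, j < s → g s = fstar s) ∧ g j = 0 := by
    intro j
    set T : Finset (E → ℕ) := hBfin.toFinset.filter (fun g => ∀ s, j < s → g s = fstar s)
      with hTdef
    have hTne : T.Nonempty := ⟨fstar, by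
      rw [hTdef, Finset.mem_filter, Set.Finite.mem_toFinset]
      exact ⟨hfstarT, fun s _ => rfl⟩⟩
    obtain ⟨g, hgT, hgmin⟩ := T.exists_min_image (fun g => g j) hTne
    rw [hTdef, Finset.mem_filter, Set.Finite.mem_toFinset] at hgT
    obtain ⟨hgB, hgsuf⟩ := hgT
    refine ⟨g, hgB, hgsuf, ?_⟩
    by_contra hc
    have hgj : 0 < g j := Nat.pos_of_ne_zero hc
    obtain ⟨h0, hh0B, hh0⟩ := hzero j
    obtain ⟨l, hl1, hl2⟩ := hexc g hgB h0 hh0B j (by omega)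
    have hlj : l ≠ j := fun h => by rw [h] at hl1; omega
    rcases lt_or_gt_of_ne hlj with hllt | hlgt
    · have hmem : Transfer g j l ∈ T := by
        rw [hTdef, Finset.mem_filter, Set.Finite.mem_toFinset]
        refine ⟨hl2, fun s hs => ?_⟩
        rw [transfer_other g (fun h => absurd (by rw [h] at hs; exact hs) (lt_irrefl j))
          (fun h => lt_asymm hllt (by rw [h] at hs; exact hs))]
        exact hgsuf s hs
      have h9 := hgmin _ hmem
      simp only [transfer_fst] at h9
      omega
    · have h2 : ∀ s, l < s → Transfer g j l s = fstar s := by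
        intro s hs
        rw [transfer_other g (fun h => lt_asymm hlgt (by rw [h] at hs; exact hs))
          (fun h => absurd (by rw [h] at hs; exact hs) (lt_irrefl l))]
        exact hgsuf s (hlgt.trans hs)
      have h3 := K1 l _ hl2 h2
      rw [transfer_snd g hlj] at h3
      have h4 := hgsuf l hlgt
      omega
  have K3 : ∀ j, ∀ g ∈ B, (∀ s, j < s → g s = fstar s) → 0 < g j →
      ∃ g' ∈ B, (∀ s, j < s → g' s = fstar s) ∧ g' j + 1 = g j := by
    intro j g hgB hgsuf hgj
    obtain ⟨g0, hg0B, hg0suf, hg0j⟩ := hz j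
    obtain ⟨l, hl1, hl2⟩ := hexc g hgB g0 hg0B j (by omega)
    have hlj : l ≠ j := fun h => by rw [h] at hl1; omega
    rcases lt_or_gt_of_ne hlj with hllt | hlgt
    · refine ⟨Transfer g j l, hl2, fun s hs => ?_, ?_⟩
      · rw [transfer_other g (fun h => absurd (by rw [h] at hs; exact hs) (lt_irrefl j))
          (fun h => lt_asymm hllt (by rw [h] at hs; exact hs))]
        exact hgsuf s hs
      · rw [transfer_fst]; omega
    · exfalso
      have h4 := hgsuf l hlgt
      have h5 := hg0suf l hlgt
      omega
  have K4 : ∀ j (c : ℕ), c ≤ fstar j → ∃ g ∈ B, (∀ s, j < s → g s = fstar s) ∧ g j = c := by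
    intro j c hc
    obtain ⟨n, hn⟩ : ∃ n, fstar j - c = n := ⟨_, rfl⟩
    induction n generalizing c with
    | zero =>
      have hceq : c = fstar j := by omega
      exact ⟨fstar, hfstarT, fun s _ => rfl, hceq.symm⟩
    | succ n ihn =>
      obtain ⟨g, hgB, hgsuf, hgj⟩ := ihn (c + 1) (by omega) (by omega)
      obtain ⟨g', hg'B, hg'suf, hg'j⟩ := K3 j g hgB hgsuf (by omega)
      exact ⟨g', hg'B, hg'suf, by omega⟩
  -- the canonical representative for (j, c)
  have Phi : ∀ j (c : ℕ), c < fstar j → ∃ F, (F ∈ B ∧ (∀ s, j < s → F s = fstar s) ∧ F j = c) ∧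
      (∀ g ∈ B, (∀ s, j < s → g s = fstar s) → g j = c → g ≠ F → TL g F) := by
    intro j c hc
    set T : Finset (E → ℕ) :=
      hBfin.toFinset.filter (fun g => (∀ s, j < s → g s = fstar s) ∧ g j = c) with hTdef
    have hTne : T.Nonempty := by
      obtain ⟨g, hgB, h1, h2⟩ := K4 j c (le_of_lt hc)
      exact ⟨g, by rw [hTdef, Finset.mem_filter, Set.Finite.mem_toFinset]; exact ⟨hgB, h1, h2⟩⟩
    obtain ⟨F, hFT, hFmax⟩ := exists_tl_max T hTne
    rw [hTdef, Finset.mem_filter, Set.Finite.mem_toFinset] at hFT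
    refine ⟨F, ⟨hFT.1, hFT.2.1, hFT.2.2⟩, ?_⟩
    intro g hg h1 h2 hne
    exact hFmax g (by rw [hTdef, Finset.mem_filter, Set.Finite.mem_toFinset]; exact ⟨hg, h1, h2⟩) hne
  -- suffix rigidity for unique-defect elements
  have SUF : ∀ f ∈ B, ∀ j, D f = {j} → ∀ s, j < s → f s = fstar s := by
    intro f hf j hdj
    have wf : WellFounded ((· > ·) : E → E → Prop) := wellFounded_gt
    intro s
    refine wf.induction (C := fun s => j < s → f s = fstar s) s ?_
    intro x IH hx
    have hsufx : ∀ t, x < t → f t = fstar t := fun t ht => IH t ht (hx.trans ht)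
    have h1 : f x ≤ fstar x := K1 x f hf hsufx
    rcases eq_or_lt_of_le h1 with he | hlt
    · exact he
    · exfalso
      have hdef : x ∈ D f := ⟨fstar, hfstarT, hlt, fun t ht => (hsufx t ht).symm⟩
      rw [hdj, Set.mem_singleton_iff] at hdef
      rw [hdef] at hx
      exact absurd hx (lt_irrefl j)
  have VAL : ∀ f ∈ B, ∀ j, D f = {j} → f j < fstar j := by
    intro f hf j hdj
    have hsuf := SUF f hf j hdj
    have h1 : f j ≤ fstar j := K1 j f hf hsuf
    have hdefj : j ∈ D f := by rw [hdj]; exact Set.mem_singleton j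
    obtain ⟨g, hgB, hgj, hgsuf⟩ := hdefj
    have hgsuf' : ∀ s, j < s → g s = fstar s := fun s hs => (hgsuf s hs).trans (hsuf s hs)
    have h2 := K1 j g hgB hgsuf'
    omega
  -- the defect set of the canonical representative is exactly {j}
  have DSET : ∀ j (c : ℕ) (hc : c < fstar j), ∀ F,
      (F ∈ B ∧ (∀ s, j < s → F s = fstar s) ∧ F j = c) →
      (∀ g ∈ B, (∀ s, j < s → g s = fstar s) → g j = c → g ≠ F → TL g F) →
      D F = {j} := by
    intro j c hc F ⟨hFB, hFsuf, hFj⟩ hFmax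
    ext t
    simp only [Set.mem_singleton_iff]
    constructor
    · rintro ⟨g, hgB, hgt, hgsuf⟩
      by_contra hne
      rcases lt_or_gt_of_ne hne with htj | htj
      · -- t < j : contradicts maximality
        have hgSfx : ∀ s, j < s → g s = fstar s :=
          fun s hs => (hgsuf s (htj.trans hs)).trans (hFsuf s hs)
        have hgj : g j = c := (hgsuf j htj).trans hFj
        have hgne : g ≠ F := fun h => by rw [h] at hgt; omega
        obtain ⟨t', ht'1, ht'2⟩ := hFmax g hgB hgSfx hgj hgne
        rcases lt_trichotomy t' t with h | rfl | h
        · have := ht'2 t h; omega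
        · omega
        · have := hgsuf t' h; omega
      · -- t > j : contradicts K1
        have hgsuf' : ∀ s, t < s → g s = fstar s :=
          fun s hs => (hgsuf s hs).trans (hFsuf s (htj.trans hs))
        have h2 := K1 t g hgB hgsuf'
        have h3 := hFsuf t htj
        omega
    · rintro rfl
      exact ⟨fstar, hfstarT, by omega, fun s hs => (hFsuf s hs).symm⟩
  -- maximality of any unique-defect element
  have ISMAX : ∀ f ∈ B, ∀ j, D f = {j} →
      ∀ g ∈ B, (∀ s, j < s → g s = f s) → g j = f j → g ≠ f → TL g f := by
    intro f hf j hdj g hg hsufg hgj hne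
    rcases TL.trichotomy hne with h | h
    · exact h
    · exfalso
      obtain ⟨t, ht1, ht2⟩ := h
      rcases lt_trichotomy t j with htj | rfl | htj
      · have hdef : t ∈ D f := ⟨g, hg, ht1, fun s hs => (ht2 s hs).symm⟩
        rw [hdj, Set.mem_singleton_iff] at hdef
        rw [hdef] at htj
        exact absurd htj (lt_irrefl j)
      · omega
      · have := hsufg t htj; omega
  -- build the bijection
  set Fc : (Σ j : E, Fin (fstar j)) → (E → ℕ) :=
    fun p => Classical.choose (Phi p.1 p.2.1 p.2.isLt) with hFc
  have Fspec : ∀ p : Σ j : E, Fin (fstar j),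
      (Fc p ∈ B ∧ (∀ s, p.1 < s → Fc p s = fstar s) ∧ Fc p p.1 = p.2.1) ∧
      (∀ g ∈ B, (∀ s, p.1 < s → g s = fstar s) → g p.1 = p.2.1 → g ≠ Fc p → TL g (Fc p)) :=
    fun p => Classical.choose_spec (Phi p.1 p.2.1 p.2.isLt)
  have FD : ∀ p : Σ j : E, Fin (fstar j), D (Fc p) = {p.1} :=
    fun p => DSET p.1 p.2.1 p.2.isLt (Fc p) (Fspec p).1 (Fspec p).2
  set θ : (Σ j : E, Fin (fstar j)) →
      {f : E → ℕ // f ∈ B ∧ (D f).ncard = 1} :=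
    fun p => ⟨Fc p, (Fspec p).1.1, by rw [FD p]; exact Set.ncard_singleton _⟩ with hθ
  have hinj : Function.Injective θ := by
    rintro ⟨j1, c1⟩ ⟨j2, c2⟩ h
    have hF : Fc ⟨j1, c1⟩ = Fc ⟨j2, c2⟩ := congrArg Subtype.val h
    have hj : j1 = j2 := by
      have h1 := FD ⟨j1, c1⟩
      have h2 := FD ⟨j2, c2⟩
      rw [hF, h2] at h1
      exact (Set.singleton_eq_singleton_iff.mp h1.symm)
    subst hj
    have hc : c1 = c2 := by
      have h1 := (Fspec ⟨j1, c1⟩).1.2.2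
      have h2 := (Fspec ⟨j1, c2⟩).1.2.2
      rw [hF] at h1
      rw [h1] at h2
      exact Fin.ext (by simpa using h2)
    rw [hc]
  have hsurj : Function.Surjective θ := by
    rintro ⟨f, hfB, hfcard⟩
    obtain ⟨j, hdj⟩ := Set.ncard_eq_one.mp hfcard
    have hval := VAL f hfB j hdj
    have hsuf := SUF f hfB j hdj
    refine ⟨⟨j, ⟨f j, hval⟩⟩, ?_⟩
    rw [hθ]
    apply Subtype.ext
    show Fc ⟨j, ⟨f j, hval⟩⟩ = f
    set p : Σ j : E, Fin (fstar j) := ⟨j, ⟨f j, hval⟩⟩ with hp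
    by_contra hne
    have h1 : TL f (Fc p) := (Fspec p).2 f hfB hsuf rfl (fun h => hne h.symm)
    have h2 : TL (Fc p) f := by
      refine ISMAX f hfB j hdj (Fc p) (Fspec p).1.1 ?_ ?_ hne
      · intro s hs
        rw [(Fspec p).1.2.1 s hs, hsuf s hs]
      · exact (Fspec p).1.2.2
    exact TL.asymm h1 h2
  have hcards := Nat.card_eq_of_bijective θ ⟨hinj, hsurj⟩
  rw [← hcards, Nat.card_eq_fintype_card, Fintype.card_sigma]
  simp only [Fintype.card_fin]
  exact hsum fstar hfstarT

end Count
end HyperProof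

namespace HyperProof
section Glue
set_option linter.unusedSectionVars false
set_option maxHeartbeats 1000000

variable {V E : Type*} [Fintype V] [Fintype E] {r : V → E → Prop}

lemma no_edge_eq (hconn : (BipGraph r).Connected) (hV : IsEmpty V) :
    ∀ x y : V ⊕ E, x = y := by
  intro x y
  obtain ⟨p⟩ := hconn.preconnected x y
  induction p with
  | nil => rfl
  | cons h p ih =>
    exfalso
    rcases h with ⟨v, e, _, _, _⟩ | ⟨v, e, _, _, _⟩ <;> exact hV.elim v

lemma no_edge_eq' (hconn : (BipGraph r).Connected) (hE : IsEmpty E) :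
    ∀ x y : V ⊕ E, x = y := by
  intro x y
  obtain ⟨p⟩ := hconn.preconnected x y
  induction p with
  | nil => rfl
  | cons h p ih =>
    exfalso
    rcases h with ⟨v, e, _, _, _⟩ | ⟨v, e, _, _, _⟩ <;> exact hE.elim e

lemma coeff_one_exterior [LinearOrder E] (r : V → E → Prop) (hE : 1 ≤ Fintype.card E) :
    (exteriorPoly r).coeff 1 =
      ((Nat.card {f : E → ℕ // IsHypertree r f ∧ extInact r f = 1} : ℕ) : ℤ) := by
  rw [exteriorPoly, Polynomial.finset_sum_coeff]
  rw [Finset.sum_congr rfl (fun i _ => by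
    rw [Polynomial.coeff_C_mul, Polynomial.coeff_X_pow, mul_ite, mul_one, mul_zero])]
  rw [Finset.sum_ite_eq]
  simp only [Finset.mem_range]
  rw [if_pos (by omega)]

/-- main counting result -/
lemma count_one [LinearOrder E] [Nonempty V] [Nonempty E]
    (hconn : (BipGraph r).Connected)
    (hdel : ∀ e : E, ((BipGraph r).induce {x | x ≠ Sum.inr e}).Connected) :
    Nat.card {f : E → ℕ // IsHypertree r f ∧ extInact r f = 1} = Fintype.card V - 1 := by
  classical
  set B : Set (E → ℕ) := {f | IsHypertree r f} with hB
  set m : ℕ := Fintype.card V - 1 with hm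
  have hsum : ∀ f ∈ B, ∑ x, f x = m := fun f hf => (hypertree_sum hf).1
  have hBfin : B.Finite := by
    apply Set.Finite.subset (Set.Finite.pi (fun _ : E => Set.finite_Iic m))
    intro f hf
    rw [Set.mem_pi]
    intro e _
    rw [Set.mem_Iic, ← hsum f hf]
    exact Finset.single_le_sum (f := fun x => f x) (fun x _ => Nat.zero_le _) (Finset.mem_univ e)
  have hBne : B.Nonempty := exists_hypertree hconn
  have hzero : ∀ j, ∃ h ∈ B, h j = 0 := fun j => by
    obtain ⟨f, h1, h2⟩ := zero_hypertree hconn hdel j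
    exact ⟨f, h1, h2⟩
  have hexc : Exc B := by
    intro f hf h hh i hlt
    obtain ⟨τ, hτ, hτdeg⟩ := hf
    obtain ⟨σ, hσ, hσdeg⟩ := hh
    have hdegτ : ∀ e, degE τ e = f e + 1 := fun e => hτdeg e
    have hdegσ : ∀ e, degE σ e = h e + 1 := fun e => hσdeg e
    have hi : degE σ i < degE τ i := by rw [hdegτ, hdegσ]; omega
    obtain ⟨l, hl1, hl2, ρ, hρ, hρi, hρl, hρo⟩ := tree_exchange hτ hσ hi
    rw [hdegτ, hdegσ] at hl2
    refine ⟨l, by omega, ?_⟩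
    refine ⟨ρ, hρ, fun e => ?_⟩
    show (ρ.neighborSet (Sum.inr e)).ncard = Transfer f i l e + 1
    have hfi : 0 < f i := by omega
    by_cases he1 : e = i
    · rw [he1, transfer_fst]
      have : degE ρ i + 1 = degE τ i := hρi
      rw [hdegτ] at this
      show degE ρ i = f i - 1 + 1
      omega
    · by_cases he2 : e = l
      · rw [he2, transfer_snd f hl1]
        have : degE ρ l = degE τ l + 1 := hρl
        rw [hdegτ] at this
        show degE ρ l = f l + 1 + 1
        omega
      · rw [transfer_other f he1 he2]
        have : degE ρ e = degE τ e := hρo e he1 he2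
        rw [hdegτ] at this
        exact this
  -- identify extInact with the defect count
  have hD : ∀ f ∈ B, extInact r f =
      ({t | ∃ g ∈ B, f t < g t ∧ ∀ s, t < s → g s = f s} : Set E).ncard := by
    intro f hf
    have h1 : extInact r f = Nat.card ↥{e : E | ∃ e' < e, IsHypertree r (Transfer f e' e)} := rfl
    rw [h1, Nat.card_coe_set_eq]
    congr 1
    ext e
    simp only [Set.mem_setOf_eq]
    have := claimA (B := B) hBfin hsum hexc hf e
    exact this
  have habs := abstract_count hBfin hBne hsum hexc hzero
  rw [← habs]
  apply Nat.card_congr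
  apply Equiv.subtypeEquivRight
  intro f
  constructor
  · rintro ⟨h1, h2⟩
    exact ⟨h1, by rw [← hD f h1]; exact h2⟩
  · rintro ⟨h1, h2⟩
    exact ⟨h1, by rw [hD f h1]; exact h2⟩

end Glue
end HyperProof

/-- if `G - e` is connected for every `e ∈ E`, then the coefficient of the
linear term of the exterior polynomial is `|V| - 1`. -/
theorem exteriorPoly_linear_coeff {V E : Type*} [Fintype V] [Fintype E] [LinearOrder E]
    (r : V → E → Prop) (hconn : (BipGraph r).Connected)
    (hdel : ∀ e : E, ((BipGraph r).induce {x | x ≠ Sum.inr e}).Connected) :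
    (exteriorPoly r).coeff 1 = (Fintype.card V : ℤ) - 1 := by
  classical
  rcases isEmpty_or_nonempty E with hE | hE
  · -- no hyperedges : the graph has no edges, so V is a single vertex
    have h0 : (exteriorPoly r).coeff 1 = 0 := by
      rw [exteriorPoly, Polynomial.finset_sum_coeff]
      rw [Finset.sum_congr rfl (fun i _ => by
        rw [Polynomial.coeff_C_mul, Polynomial.coeff_X_pow, mul_ite, mul_one, mul_zero])]
      rw [Finset.sum_ite_eq]
      simp [Fintype.card_eq_zero]
    rw [h0]
    have hVne : Nonempty V := by
      have := hconn.nonempty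
      rcases this with ⟨x⟩
      rcases x with v | e
      · exact ⟨v⟩
      · exact hE.elim e
    have hsub : ∀ v w : V, v = w := by
      intro v w
      have := HyperProof.no_edge_eq' (r := r) hconn hE (Sum.inl v) (Sum.inl w)
      exact Sum.inl.inj this
    obtain ⟨v⟩ := hVne
    have hcard : Fintype.card V = 1 :=
      Fintype.card_eq_one_iff.mpr ⟨v, fun w => hsub w v⟩
    rw [hcard]
    ring
  · rcases isEmpty_or_nonempty V with hV | hV
    · -- V empty : contradiction with hdel
      exfalso
      obtain ⟨e⟩ := hE
      have hsub := HyperProof.no_edge_eq (r := r) hconn hV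
      have hne := (hdel e).nonempty
      obtain ⟨⟨x, hx⟩⟩ := hne
      exact hx (hsub x (Sum.inr e))
    · have hE1 : 1 ≤ Fintype.card E := Fintype.card_pos
      rw [HyperProof.coeff_one_exterior r hE1]
      rw [HyperProof.count_one hconn hdel]
      have hV1 : 1 ≤ Fintype.card V := Fintype.card_pos
      push_cast [Nat.cast_sub hV1]
      ring
end
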